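/- arXiv:0708.3234 — 10 statements merged into one kernel-verified Lean document; each statement's English description precedes it below -/
import Mathlib

section
/- Let X be a topological space, Ω a metric space, and f_n : X → Ω continuous for each n ≥ 0. Then the set RPX = { x ∈ X : the sequence {f_n(x)}_{n≥0} has the repetition property } is a G_δ subset of X. -/
open Filter MeasureTheory

/-- A sequence in a metric space has the repetition property. -/
def HasRP {Ω : Type*} [MetricSpace Ω] (ω : ℕ → Ω) : Prop :=
  ∀ ε > 0, ∀ r : ℕ, 0 < r → ∃ q : ℕ, 0 < q ∧ ∀ n ≤ r * q, dist (ω n) (ω (n + q)) < ε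

/-- Two sequences have the joint repetition property. -/
def JointRP {Ω Ω' : Type*} [MetricSpace Ω] [MetricSpace Ω'] (ω : ℕ → Ω) (ω' : ℕ → Ω') : Prop :=
  ∀ ε > 0, ∀ r : ℕ, 0 < r → ∃ q : ℕ, 0 < q ∧
    (∀ n ≤ r * q, dist (ω n) (ω (n + q)) < ε) ∧
    (∀ n ≤ r * q, dist (ω' n) (ω' (n + q)) < ε)

theorem stmt1 {X : Type*} [TopologicalSpace X] {Ω : Type*} [MetricSpace Ω]
    (f : ℕ → X → Ω) (hf : ∀ n, Continuous (f n)) :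
    IsGδ { x : X | HasRP (fun n => f n x) } := by
  have hset : { x : X | HasRP (fun n => f n x) } =
      ⋂ (k : ℕ), ⋂ (r : ℕ),
        { x : X | ∃ q : ℕ, 0 < q ∧ ∀ n ≤ (r + 1) * q,
            dist (f n x) (f (n + q) x) < 1 / (k + 1) } := by
    ext x
    simp only [Set.mem_iInter, Set.mem_setOf_eq]
    constructor
    · intro h k r
      exact h (1 / (k + 1)) (by positivity) (r + 1) (Nat.succ_pos r)
    · intro h ε hε r hr
      obtain ⟨k, hk⟩ := exists_nat_one_div_lt hε
      obtain ⟨q, hq, hq'⟩ := h k (r - 1)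
      refine ⟨q, hq, fun n hn => ?_⟩
      have : n ≤ (r - 1 + 1) * q := by
        rwa [Nat.sub_add_cancel hr]
      exact lt_trans (hq' n this) hk
  rw [hset]
  refine IsGδ.iInter fun k => IsGδ.iInter fun r => IsOpen.isGδ ?_
  have : { x : X | ∃ q : ℕ, 0 < q ∧ ∀ n ≤ (r + 1) * q,
      dist (f n x) (f (n + q) x) < 1 / (k + 1) } =
      ⋃ (q : ℕ) (_ : 0 < q), ⋂ n ∈ Finset.range ((r + 1) * q + 1),
        { x : X | dist (f n x) (f (n + q) x) < 1 / (k + 1) } := by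
    ext x
    simp only [Set.mem_setOf_eq, Set.mem_iUnion, Set.mem_iInter, Finset.mem_range,
      Nat.lt_succ_iff]
    tauto
  rw [this]
  refine isOpen_iUnion fun q => isOpen_iUnion fun _ => isOpen_biInter_finset fun n _ => ?_
  exact isOpen_lt (Continuous.dist (hf n) (hf (n + q))) continuous_const
end

section
/- If Ω is a metric space and T : Ω → Ω is continuous, then the set PRP(T) = { ω ∈ Ω : the sequence {T^n ω}_{n≥0} has the repetition property } is a G_δ subset of Ω. -/
open Filter MeasureTheory

theorem stmt2 {Ω : Type*} [MetricSpace Ω] (T : Ω → Ω) (hT : Continuous T) :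
    IsGδ { ω : Ω | HasRP (fun n => T^[n] ω) } := by
  have hset : { ω : Ω | HasRP (fun n => T^[n] ω) } =
      ⋂ k : ℕ, ⋂ r : ℕ, ⋃ q : ℕ,
        {ω : Ω | ∀ n ≤ (r+1) * (q+1), dist (T^[n] ω) (T^[n + (q+1)] ω) < 1/((k:ℝ)+1)} := by
    ext ω
    simp only [Set.mem_setOf_eq, Set.mem_iInter, Set.mem_iUnion, HasRP]
    constructor
    · intro h k r
      obtain ⟨q, hq, hq2⟩ := h (1/((k:ℝ)+1)) (by positivity) (r+1) (Nat.succ_pos r)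
      refine ⟨q - 1, ?_⟩
      have hqq : q - 1 + 1 = q := Nat.succ_pred_eq_of_pos hq
      rw [hqq]
      exact hq2
    · intro h ε hε r hr
      obtain ⟨k, hk⟩ := exists_nat_one_div_lt hε
      obtain ⟨q, hq⟩ := h k (r-1)
      refine ⟨q+1, Nat.succ_pos q, fun n hn => ?_⟩
      have hr' : r - 1 + 1 = r := Nat.succ_pred_eq_of_pos hr
      exact lt_trans (hq n (by rwa [hr'])) hk
  rw [hset]
  refine IsGδ.iInter fun k => IsGδ.iInter fun r => IsOpen.isGδ ?_
  refine isOpen_iUnion fun q => ?_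
  have heq : {ω : Ω | ∀ n ≤ (r+1)*(q+1), dist (T^[n] ω) (T^[n+(q+1)] ω) < 1/((k:ℝ)+1)} =
      ⋂ n ∈ Finset.range ((r+1)*(q+1)+1), {ω | dist (T^[n] ω) (T^[n+(q+1)] ω) < 1/((k:ℝ)+1)} := by
    ext ω; simp [Nat.lt_succ_iff]
  rw [heq]
  exact isOpen_biInter_finset fun n _ =>
    isOpen_lt (Continuous.dist (hT.iterate n) (hT.iterate (n+(q+1)))) continuous_const
end

section
/- Let {ω_n} be a sequence in a metric space Ω with the repetition property. Then the set of sequences {ω'_n} in a metric space Ω' such that {ω_n} and {ω'_n} have the joint repetition property is closed under uniform convergence: if sequences {ω'^{(k)}_n} each have the joint repetition property with {ω_n} and ω'^{(k)}_n → ω'_n uniformly in n as k → ∞, then {ω'_n} has the joint repetition property with {ω_n}. -/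
open Filter MeasureTheory

theorem stmt5 {Ω Ω' : Type*} [MetricSpace Ω] [MetricSpace Ω']
    (ω : ℕ → Ω) (hω : HasRP ω) (W : ℕ → ℕ → Ω') (ω' : ℕ → Ω')
    (hW : ∀ k, JointRP ω (W k)) (hconv : TendstoUniformly W ω' atTop) :
    JointRP ω ω' := by
  intro ε hε r hr
  have h3 : (0:ℝ) < ε / 3 := by linarith
  obtain ⟨k, hk⟩ := (Metric.tendstoUniformly_iff.mp hconv (ε/3) h3).exists
  obtain ⟨q, hq, h1, h2⟩ := hW k (ε/3) h3 r hr
  refine ⟨q, hq, fun n hn => lt_of_lt_of_le (h1 n hn) (by linarith), fun n hn => ?_⟩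
  have a := hk n
  have b := hk (n + q)
  have c := h2 n hn
  calc dist (ω' n) (ω' (n + q)) ≤ dist (ω' n) (W k n) + dist (W k n) (W k (n+q))
        + dist (W k (n+q)) (ω' (n+q)) := dist_triangle4 _ _ _ _
    _ < ε/3 + ε/3 + ε/3 := by
        rw [dist_comm (W k (n+q))]; exact add_lt_add (add_lt_add a c) b
    _ = ε := by ring
end

section
/- If {ω_n}_{n≥0} is a sequence in the circle 𝕋 with the repetition property, then for every positive integer l, the subsampled sequence {ω_{nl}}_{n≥0} has the repetition property. -/
open Filter MeasureTheory

theorem stmt7 (ω : ℕ → UnitAddCircle) (hω : HasRP ω) (l : ℕ) (hl : 0 < l) :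
    HasRP (fun n => ω (n * l)) := by
  intro ε hε r hr
  obtain ⟨q, hq, h⟩ := hω (ε / (l + 1)) (by positivity) (r * l + l)
    (by positivity)
  refine ⟨q, hq, fun n hn => ?_⟩
  have key : ∀ k : ℕ, n * l + k * q ≤ (r * l + l) * q →
      dist (ω (n * l)) (ω (n * l + k * q)) ≤ k * (ε / (l + 1)) := by
    intro k
    induction k with
    | zero => simp
    | succ k ih =>
      intro hk
      have hk' : n * l + k * q ≤ (r * l + l) * q := by nlinarith [Nat.zero_le q]
      have h1 := ih hk'
      have h2 := h (n * l + k * q) hk'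
      have e : n * l + k * q + q = n * l + (k + 1) * q := by ring
      rw [e] at h2
      calc dist (ω (n * l)) (ω (n * l + (k + 1) * q))
          ≤ dist (ω (n * l)) (ω (n * l + k * q))
            + dist (ω (n * l + k * q)) (ω (n * l + (k + 1) * q)) := dist_triangle _ _ _
        _ ≤ k * (ε / (l + 1)) + ε / (l + 1) := by linarith
        _ = (k + 1 : ℕ) * (ε / (l + 1)) := by push_cast; ring
  have hb : n * l + l * q ≤ (r * l + l) * q := by nlinarith
  have := key l (by linarith [hb, Nat.mul_comm l q])
  have hlt : (l : ℝ) * (ε / (l + 1)) < ε := by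
    rw [mul_div_assoc']
    rw [div_lt_iff₀ (by positivity)]
    nlinarith
  simp only []
  have e2 : (n + q) * l = n * l + l * q := by ring
  rw [e2]
  calc dist (ω (n * l)) (ω (n * l + l * q)) ≤ l * (ε / (l + 1)) := by
        have e3 : n * l + l * q = n * l + l * q := rfl
        simpa [Nat.mul_comm q l] using key l (by omega)
    _ < ε := hlt
end

section
/- If {ω_n}_{n≥0} is a sequence in a metric space with the repetition property, then for every α ∈ 𝕋 the sequences {ω_n} and {nα}_{n≥0} in 𝕋 have the joint repetition property. -/
open Filter MeasureTheory

theorem stmt9 {Ω : Type*} [MetricSpace Ω] (ω : ℕ → Ω) (hω : HasRP ω)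
    (α : UnitAddCircle) : JointRP ω (fun n => n • α) := by
  intro ε hε r hr
  -- choose k with 1/(k+1) < ε
  obtain ⟨k, hk⟩ : ∃ k : ℕ, 0 < k ∧ (1 : ℝ) / (k + 1) < ε := by
    obtain ⟨k, hk⟩ := exists_nat_gt (1 / ε)
    refine ⟨k + 1, Nat.succ_pos _, ?_⟩
    rw [div_lt_iff₀ (by positivity)]
    rw [div_lt_iff₀ hε] at hk
    calc (1 : ℝ) < ε * k := by linarith
    _ ≤ ε * ((k + 1 : ℕ) + 1) := by
        apply mul_le_mul_of_nonneg_left _ hε.le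
        push_cast; linarith
  obtain ⟨hk0, hkε⟩ := hk
  have hεk : (0 : ℝ) < ε / k := by positivity
  obtain ⟨q, hq0, hq⟩ := hω (ε / k) hεk ((r + 1) * k) (by positivity)
  -- Dirichlet: some multiple j*q has small norm on the circle
  obtain ⟨j, hj, hjnorm⟩ := AddCircle.exists_norm_nsmul_le (T := 1) (q • α) hk0
  obtain ⟨hj1, hjk⟩ := hj
  refine ⟨j * q, Nat.mul_pos hj1 hq0, ?_, ?_⟩
  · -- ω part
    have key : ∀ m : ℕ, ∀ n : ℕ, n + m * q ≤ (r + 1) * k * q + q →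
        dist (ω n) (ω (n + m * q)) ≤ m * (ε / k) := by
      intro m
      induction m with
      | zero => intro n _; simp
      | succ m ih =>
          intro n hn
          have hstep : n + m * q ≤ (r + 1) * k * q := by
            have : n + (m + 1) * q = n + m * q + q := by ring
            omega
          calc dist (ω n) (ω (n + (m + 1) * q))
              ≤ dist (ω n) (ω (n + m * q)) + dist (ω (n + m * q)) (ω (n + (m + 1) * q)) :=
                dist_triangle _ _ _
            _ ≤ m * (ε / k) + dist (ω (n + m * q)) (ω (n + m * q + q)) := by
                have : n + (m + 1) * q = n + m * q + q := by ring
                rw [this]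
                exact add_le_add_left (ih n (by omega)) _
            _ ≤ m * (ε / k) + ε / k := add_le_add_right (hq _ hstep).le _
            _ ≤ (m + 1 : ℕ) * (ε / k) := le_of_eq (by push_cast; ring)
    intro n hn
    -- split last step for strictness
    have hrange : n + j * q ≤ (r + 1) * k * q := by
      have h1 : n ≤ r * (j * q) := hn
      have h2 : j * q ≤ k * q := Nat.mul_le_mul_right q hjk
      calc n + j * q ≤ r * (j * q) + j * q := by omega
        _ = (r + 1) * (j * q) := by ring
        _ ≤ (r + 1) * (k * q) := Nat.mul_le_mul_left _ h2
        _ = (r + 1) * k * q := by ring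
    obtain ⟨j', rfl⟩ : ∃ j', j = j' + 1 := ⟨j - 1, by omega⟩
    have h1 : n + j' * q ≤ (r + 1) * k * q + q := by
      have : n + (j' + 1) * q = n + j' * q + q := by ring
      omega
    have hlast : n + j' * q ≤ (r + 1) * k * q := by
      have : n + (j' + 1) * q = n + j' * q + q := by ring
      omega
    calc dist (ω n) (ω (n + (j' + 1) * q))
        ≤ dist (ω n) (ω (n + j' * q)) + dist (ω (n + j' * q)) (ω (n + (j' + 1) * q)) :=
          dist_triangle _ _ _
      _ < j' * (ε / k) + ε / k := by
          apply add_lt_add_of_le_of_lt (key j' n h1)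
          have : n + (j' + 1) * q = n + j' * q + q := by ring
          rw [this]
          exact hq _ hlast
      _ = (j' + 1) * (ε / k) := by ring
      _ ≤ k * (ε / k) := by
          apply mul_le_mul_of_nonneg_right _ hεk.le
          exact_mod_cast hjk
      _ = ε := by field_simp
  · -- circle part
    intro n _
    simp only
    have : dist ((n : ℕ) • α) ((n + j * q) • α) = ‖(j * q) • α‖ := by
      rw [dist_eq_norm, add_smul, sub_add_cancel_left, norm_neg]
    rw [this, mul_comm j q, mul_smul]
    calc ‖q • (j • α)‖ = ‖j • (q • α)‖ := by rw [smul_comm]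
      _ ≤ 1 / (k + 1) := by simpa using hjnorm
      _ < ε := hkε
end

section
/- If {ω_n}_{n≥0} is a sequence in 𝕋 with the repetition property, then for all α, β ∈ 𝕋 the sequences {ω_n} and {ω_n + nα + β}_{n≥0} have the joint repetition property. -/
open Filter MeasureTheory

/-- Uniform pigeonhole: there is a `K` (depending only on `ε`) such that for every point `x`
of the circle some multiple `k • x` with `1 ≤ k ≤ K` is within `ε` of `0`. -/
lemma exists_pigeon (ε : ℝ) (hε : 0 < ε) :
    ∃ K : ℕ, 0 < K ∧ ∀ x : UnitAddCircle, ∃ k : ℕ, 0 < k ∧ k ≤ K ∧ ‖k • x‖ < ε := by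
  obtain ⟨t, htfin, htcov⟩ := Metric.totallyBounded_iff.mp
    (isCompact_univ (X := UnitAddCircle)).totallyBounded (ε / 2) (by linarith)
  refine ⟨htfin.toFinset.card + 1, Nat.succ_pos _, fun x => ?_⟩
  have hmem : ∀ j : ℕ, ∃ c ∈ htfin.toFinset, (j • x) ∈ Metric.ball c (ε / 2) := by
    intro j
    have := htcov (Set.mem_univ (j • x))
    simp only [Set.mem_iUnion] at this
    obtain ⟨c, hc, hc'⟩ := this
    exact ⟨c, htfin.mem_toFinset.2 hc, hc'⟩
  choose c hc hcb using hmem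
  have hcard : htfin.toFinset.card < (Finset.range (htfin.toFinset.card + 2)).card := by
    simp
  obtain ⟨i, hi, j, hj, hij, hfij⟩ :=
    Finset.exists_ne_map_eq_of_card_lt_of_maps_to hcard (fun a _ => hc a)
  wlog hlt : i < j generalizing i j
  · exact this j hj i hi hij.symm hfij.symm (by omega)
  refine ⟨j - i, by omega, by simp at hj; omega, ?_⟩
  have hsub : (j - i) • x = j • x - i • x := by
    rw [sub_nsmul x hlt.le, ← sub_eq_add_neg]
  rw [hsub, ← dist_eq_norm]
  calc dist (j • x) (i • x) ≤ dist (j • x) (c j) + dist (c j) (i • x) := dist_triangle _ _ _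
    _ < ε / 2 + ε / 2 := by
        have h1 := hcb j
        have h2 := hcb i
        rw [Metric.mem_ball] at h1 h2
        rw [hfij] at h2
        rw [dist_comm (c j)]
        linarith
    _ = ε := by ring

/-- Chaining: if consecutive steps of size `q` move by less than `δ` up to time `M`,
then `k` steps move by at most `k * δ`. -/
lemma chain {Ω : Type*} [MetricSpace Ω] (ω : ℕ → Ω) (q M : ℕ) (δ : ℝ)
    (h : ∀ n ≤ M, dist (ω n) (ω (n + q)) < δ) :
    ∀ k n, (∀ i < k, n + i * q ≤ M) → dist (ω n) (ω (n + k * q)) ≤ k * δ := by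
  intro k
  induction k with
  | zero => intro n _; simp
  | succ k ih =>
    intro n hn
    have h1 : dist (ω n) (ω (n + k * q)) ≤ k * δ := ih n (fun i hi => hn i (by omega))
    have h2 : dist (ω (n + k * q)) (ω (n + k * q + q)) < δ := h _ (hn k (by omega))
    have he : n + (k + 1) * q = n + k * q + q := by ring
    rw [he]
    calc dist (ω n) (ω (n + k * q + q))
        ≤ dist (ω n) (ω (n + k * q)) + dist (ω (n + k * q)) (ω (n + k * q + q)) :=
          dist_triangle _ _ _
      _ ≤ k * δ + δ := by linarith
      _ = (k + 1 : ℕ) * δ := by push_cast; ring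

theorem stmt10 (ω : ℕ → UnitAddCircle) (hω : HasRP ω) (α β : UnitAddCircle) :
    JointRP ω (fun n => ω n + n • α + β) := by
  intro ε hε r hr
  obtain ⟨K, hK, hpigeon⟩ := exists_pigeon (ε / 2) (by linarith)
  have hδ : (0 : ℝ) < ε / (2 * K) := by positivity
  obtain ⟨q, hq, hqrep⟩ := hω (ε / (2 * K)) hδ ((r + 1) * K) (by positivity)
  obtain ⟨k, hk0, hkK, hknorm⟩ := hpigeon (q • α)
  have hidx : ∀ n ≤ r * (k * q), ∀ i < k, n + i * q ≤ (r + 1) * K * q := by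
    intro n hn i hi
    have h1 : n + i * q ≤ r * (k * q) + K * q :=
      Nat.add_le_add hn (Nat.mul_le_mul (by omega) le_rfl)
    have h2 : r * (k * q) ≤ r * (K * q) :=
      Nat.mul_le_mul le_rfl (Nat.mul_le_mul hkK le_rfl)
    have h3 : r * (K * q) + K * q = (r + 1) * K * q := by ring
    linarith
  have hbound : ∀ n ≤ r * (k * q), dist (ω n) (ω (n + k * q)) ≤ ε / 2 := by
    intro n hn
    have hb : dist (ω n) (ω (n + k * q)) ≤ k * (ε / (2 * K)) :=
      chain ω q ((r + 1) * K * q) _ hqrep k n (hidx n hn)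
    have hKpos : (0 : ℝ) < K := by exact_mod_cast hK
    have hkle : (k : ℝ) ≤ K := by exact_mod_cast hkK
    have h4 : (K : ℝ) * (ε / (2 * K)) = ε / 2 := by field_simp
    nlinarith [mul_le_mul_of_nonneg_right hkle hδ.le]
  refine ⟨k * q, by positivity, fun n hn => lt_of_le_of_lt (hbound n hn) (by linarith), ?_⟩
  intro n hn
  simp only
  rw [dist_eq_norm]
  have heq : (ω n + n • α + β) - (ω (n + k * q) + (n + k * q) • α + β)
      = (ω n - ω (n + k * q)) - (k * q) • α := by
    rw [add_nsmul]; abel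
  rw [heq]
  have hnorm1 : ‖ω n - ω (n + k * q)‖ ≤ ε / 2 := by
    rw [← dist_eq_norm]; exact hbound n hn
  have hnorm2 : ‖(k * q) • α‖ < ε / 2 := by
    rw [mul_comm, mul_nsmul]; exact hknorm
  calc ‖(ω n - ω (n + k * q)) - (k * q) • α‖
      ≤ ‖ω n - ω (n + k * q)‖ + ‖(k * q) • α‖ := norm_sub_le _ _
    _ < ε / 2 + ε / 2 := by linarith
    _ = ε := by ring
end

section
/- Let {ω_n}_{n≥0} be a real sequence whose projection to 𝕋 = ℝ/ℤ has the repetition property, and suppose there exist integers k ≥ 1 and a_1, ..., a_k with |a_k| = 1 such that ω_n + a_1 ω_{n−1} + ... + a_k ω_{n−k} = 0 for all n ≥ k. Then for every rational number r, the projection to 𝕋 of the sequence {r ω_n}_{n≥0} has the repetition property, jointly with the original projected sequence. -/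
open Filter MeasureTheory

lemma sum_mod_smul {M : Type*} [AddCommMonoid M] (f : ℕ → M) (p : ℕ) :
    ∀ c : ℕ, ∑ j ∈ Finset.range (c * p), f (j % p) = c • ∑ j ∈ Finset.range p, f j := by
  intro c
  induction c with
  | zero => simp
  | succ c ih =>
    have h : (c + 1) * p = c * p + p := by ring
    rw [h, Finset.sum_range_add, ih, succ_nsmul]
    congr 1
    refine Finset.sum_congr rfl fun j hj => ?_
    rw [Nat.mul_add_mod', Nat.mod_eq_of_lt (Finset.mem_range.mp hj)]

lemma core_period (d k N : ℕ) (hd : 0 < d) (hk : 1 ≤ k) (a : ℕ → ℤ)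
    (hak : a k = 1 ∨ a k = -1) (m : ℕ → ℤ)
    (hN : 2 * d ^ k + 2 * k ≤ N)
    (hrec : ∀ n, k ≤ n → n ≤ N → m n + ∑ i ∈ Finset.Icc 1 k, a i * m (n - i) = 0) :
    ∃ p, 0 < p ∧ p ≤ d ^ k ∧
      ∀ n, n + p + k ≤ N → ((m (n + p) : ZMod d) = (m n : ZMod d)) := by
  classical
  haveI : NeZero d := ⟨hd.ne'⟩
  -- forward determinism mod d
  have hfwd : ∀ n, k ≤ n → n ≤ N →
      ((m n : ZMod d)) = - ∑ i ∈ Finset.Icc 1 k, (a i : ZMod d) * (m (n - i) : ZMod d) := by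
    intro n h1 h2
    have h := congrArg (fun z : ℤ => (z : ZMod d)) (hrec n h1 h2)
    push_cast at h
    linear_combination h
  -- backward determinism over ℤ
  have hkmem : k ∈ Finset.Icc 1 k := by simp [hk]
  have hbwd : ∀ n, n + k ≤ N →
      m n = - a k * (m (n + k) + ∑ i ∈ (Finset.Icc 1 k).erase k, a i * m (n + k - i)) := by
    intro n hn
    have h := hrec (n + k) (by omega) (by omega)
    rw [← Finset.add_sum_erase _ _ hkmem] at h
    have hnk : n + k - k = n := by omega
    rw [hnk] at h
    rcases hak with h1 | h1 <;> rw [h1] at h ⊢ <;> linarith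
  -- pigeonhole
  have hcard : Fintype.card (Fin k → ZMod d) = d ^ k := by simp [ZMod.card]
  set F : ℕ → (Fin k → ZMod d) := fun n i => (m (n + (i : ℕ)) : ZMod d) with hF
  obtain ⟨n1, n2, hlt, hn2le, hFeq⟩ :
      ∃ n1 n2, n1 < n2 ∧ n2 ≤ d ^ k ∧ F n1 = F n2 := by
    obtain ⟨u, hu, v, hv, huv, hfe⟩ :=
      Finset.exists_ne_map_eq_of_card_lt_of_maps_to
        (s := Finset.range (d ^ k + 1)) (t := (Finset.univ : Finset (Fin k → ZMod d)))
        (by simp [hcard]) (fun x _ => Finset.mem_univ (F x))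
    simp only [Finset.mem_range] at hu hv
    rcases Nat.lt_or_ge u v with h | h
    · exact ⟨u, v, h, by omega, hfe⟩
    · exact ⟨v, u, by omega, by omega, hfe.symm⟩
  set p := n2 - n1 with hp
  have hp0 : 0 < p := by omega
  have hpk : p ≤ d ^ k := by omega
  refine ⟨p, hp0, hpk, ?_⟩
  have base : ∀ i, i < k → (m (n1 + i + p) : ZMod d) = (m (n1 + i) : ZMod d) := by
    intro i hi
    have h := congrFun hFeq ⟨i, hi⟩
    simp only [hF] at h
    have e : n1 + i + p = n2 + i := by omega
    rw [e]
    exact h.symm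
  -- forward propagation
  have fwdP : ∀ n, n1 ≤ n → n + p + k ≤ N → (m (n + p) : ZMod d) = (m n : ZMod d) := by
    intro n
    induction n using Nat.strong_induction_on with
    | _ n ih =>
      intro hn1 hrange
      by_cases hcase : n < n1 + k
      · obtain ⟨i, hi, rfl⟩ : ∃ i, i < k ∧ n = n1 + i := ⟨n - n1, by omega, by omega⟩
        exact base _ hi
      · have hkn : k ≤ n := by omega
        rw [hfwd (n + p) (by omega) (by omega), hfwd n hkn (by omega)]
        congr 1
        refine Finset.sum_congr rfl fun i hi => ?_
        simp only [Finset.mem_Icc] at hi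
        have h1 : n + p - i = (n - i) + p := by omega
        rw [h1, ih (n - i) (by omega) (by omega) (by omega)]
  -- full propagation (backward part)
  have allP : ∀ t n, n1 ≤ n + t → n + p + k ≤ N → (m (n + p) : ZMod d) = (m n : ZMod d) := by
    intro t
    induction t using Nat.strong_induction_on with
    | _ t ih =>
      intro n hle hrange
      by_cases hge : n1 ≤ n
      · exact fwdP n hge hrange
      · have hnn1 : n < n1 := by omega
        have key : ∀ j, 1 ≤ j → j ≤ k → (m (n + j + p) : ZMod d) = (m (n + j) : ZMod d) := by
          intro j hj1 hjk
          by_cases hge2 : n1 ≤ n + j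
          · exact fwdP (n + j) hge2 (by omega)
          · exact ih (t - j) (by omega) (n + j) (by omega) (by omega)
        have e1 := hbwd n (by omega)
        have e2 := hbwd (n + p) (by omega)
        have e1' := congrArg (fun z : ℤ => (z : ZMod d)) e1
        have e2' := congrArg (fun z : ℤ => (z : ZMod d)) e2
        push_cast at e1' e2'
        rw [e1', e2']
        have hA : (m (n + p + k) : ZMod d) = (m (n + k) : ZMod d) := by
          have h := key k hk le_rfl
          rw [show n + k + p = n + p + k from by omega] at h
          exact h
        rw [hA]
        congr 2
        refine Finset.sum_congr rfl fun i hi => ?_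
        simp only [Finset.mem_erase, Finset.mem_Icc] at hi
        have h := key (k - i) (by omega) (by omega)
        rw [show n + (k - i) + p = n + p + k - i from by omega,
            show n + (k - i) = n + k - i from by omega] at h
        rw [h]
  intro n hn
  exact allP (n1 - n) n (by omega) hn


theorem stmt12 (ω : ℕ → ℝ) (hω : HasRP (fun n => ((ω n : ℝ) : UnitAddCircle)))
    (k : ℕ) (hk : 1 ≤ k) (a : ℕ → ℤ) (hak : |a k| = 1)
    (hrec : ∀ n, k ≤ n → ω n + ∑ i ∈ Finset.Icc 1 k, (a i : ℝ) * ω (n - i) = 0)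
    (r : ℚ) :
    JointRP (fun n => ((ω n : ℝ) : UnitAddCircle))
      (fun n => (((r : ℝ) * ω n : ℝ) : UnitAddCircle)) := by
  intro ε hε R hR
  classical
  have hak' : a k = 1 ∨ a k = -1 := by
    rcases (abs_eq (by norm_num : (0:ℤ) ≤ 1)).mp hak with h | h
    · exact Or.inl h
    · exact Or.inr h
  set d : ℕ := r.den with hd_def
  have hd : 0 < d := r.pos
  haveI : NeZero d := ⟨hd.ne'⟩
  have hdR : (0:ℝ) < d := by exact_mod_cast hd
  set c : ℤ := r.num with hc_def
  set A : ℝ := 1 + ∑ i ∈ Finset.Icc 1 k, |(a i : ℝ)| with hA_def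
  have hA1 : 1 ≤ A := by
    have h : (0:ℝ) ≤ ∑ i ∈ Finset.Icc 1 k, |(a i : ℝ)| :=
      Finset.sum_nonneg fun i _ => abs_nonneg _
    rw [hA_def]; linarith
  have hA0 : 0 < A := by linarith
  set P : ℕ := (d ^ k).factorial with hP_def
  have hP : 0 < P := Nat.factorial_pos _
  set s : ℕ := d * P with hs_def
  have hs : 0 < s := Nat.mul_pos hd hP
  have hsR : (0:ℝ) < s := by exact_mod_cast hs
  set E : ℝ := min ε 1 with hE_def
  have hE0 : 0 < E := lt_min hε one_pos
  have hEε : E ≤ ε := min_le_left _ _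
  set C : ℝ := |(c : ℝ)| + 1 with hC_def
  have hC : 0 < C := by positivity
  have hcC : |(c:ℝ)| ≤ C := by rw [hC_def]; linarith
  set ε' : ℝ := min (1 / (2 * A)) (min (E / (2 * s)) (E * d / (2 * C * s))) with hε'_def
  have hε'0 : 0 < ε' := by
    refine lt_min (by positivity) (lt_min (by positivity) (by positivity))
  -- two derived bounds on ε'
  have hbound1 : (s:ℝ) * ε' ≤ E / 2 := by
    have h1 : ε' ≤ E / (2 * s) := le_trans (min_le_right _ _) (min_le_left _ _)
    have h2 : (s:ℝ) * ε' ≤ (s:ℝ) * (E / (2 * s)) :=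
      mul_le_mul_of_nonneg_left h1 hsR.le
    have h3 : (s:ℝ) * (E / (2 * s)) = E / 2 := by
      field_simp
    linarith
  have hbound2 : (C / d) * ((s:ℝ) * ε') ≤ E / 2 := by
    have h1 : ε' ≤ E * d / (2 * C * s) := le_trans (min_le_right _ _) (min_le_right _ _)
    have h2 : (s:ℝ) * ε' ≤ (s:ℝ) * (E * d / (2 * C * s)) :=
      mul_le_mul_of_nonneg_left h1 hsR.le
    have h3 : (C / d) * ((s:ℝ) * (E * d / (2 * C * s))) = E / 2 := by
      field_simp
    have h4 : (C / d) * ((s:ℝ) * ε') ≤ (C / d) * ((s:ℝ) * (E * d / (2 * C * s))) :=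
      mul_le_mul_of_nonneg_left h2 (by positivity)
    linarith
  obtain ⟨q, hq0, hq⟩ := hω ε' hε'0 ((R+1) * s + 2 * d ^ k + 2 * k) (by positivity)
  set N : ℕ := ((R+1) * s + 2 * d ^ k + 2 * k) * q with hN_def
  set m : ℕ → ℤ := fun n => round (ω (n + q) - ω n) with hm_def
  have hδ : ∀ n, n ≤ N → |ω (n + q) - ω n - (m n : ℝ)| < ε' := by
    intro n hn
    have h := hq n hn
    simp only at h
    rw [dist_comm, dist_eq_norm, ← QuotientAddGroup.mk_sub, UnitAddCircle.norm_eq] at h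
    simpa [hm_def] using h
  -- integer recurrence for m
  have hθrec : ∀ n, k ≤ n → (ω (n + q) - ω n) +
      ∑ i ∈ Finset.Icc 1 k, (a i : ℝ) * (ω (n - i + q) - ω (n - i)) = 0 := by
    intro n hkn
    have h1 := hrec n hkn
    have h2 := hrec (n + q) (by omega)
    have hEq : ∑ i ∈ Finset.Icc 1 k, (a i : ℝ) * ω (n + q - i)
        = ∑ i ∈ Finset.Icc 1 k, (a i : ℝ) * ω (n - i + q) := by
      refine Finset.sum_congr rfl fun i hi => ?_
      simp only [Finset.mem_Icc] at hi
      rw [show n + q - i = n - i + q from by omega]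
    rw [hEq] at h2
    have hsplit : ∑ i ∈ Finset.Icc 1 k, (a i : ℝ) * (ω (n - i + q) - ω (n - i))
        = ∑ i ∈ Finset.Icc 1 k, (a i : ℝ) * ω (n - i + q)
          - ∑ i ∈ Finset.Icc 1 k, (a i : ℝ) * ω (n - i) := by
      rw [← Finset.sum_sub_distrib]
      exact Finset.sum_congr rfl fun i _ => by ring
    rw [hsplit]
    linarith
  have hmrec : ∀ n, k ≤ n → n ≤ N → m n + ∑ i ∈ Finset.Icc 1 k, a i * m (n - i) = 0 := by
    intro n hkn hnN
    have hTr : ((m n + ∑ i ∈ Finset.Icc 1 k, a i * m (n - i) : ℤ) : ℝ)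
        = -((ω (n + q) - ω n - (m n : ℝ))
          + ∑ i ∈ Finset.Icc 1 k, (a i : ℝ) * (ω (n - i + q) - ω (n - i) - (m (n - i) : ℝ))) := by
      have h := hθrec n hkn
      have hs1 : ∑ i ∈ Finset.Icc 1 k, (a i : ℝ) * (ω (n - i + q) - ω (n - i) - (m (n - i) : ℝ))
          = ∑ i ∈ Finset.Icc 1 k, (a i : ℝ) * (ω (n - i + q) - ω (n - i))
            - ∑ i ∈ Finset.Icc 1 k, (a i : ℝ) * (m (n - i) : ℝ) := by
        rw [← Finset.sum_sub_distrib]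
        exact Finset.sum_congr rfl fun i _ => by ring
      push_cast
      rw [hs1]
      linarith
    have hb1 : |ω (n + q) - ω n - (m n : ℝ)| < ε' := hδ n hnN
    have hb2 : ∑ i ∈ Finset.Icc 1 k, |(a i : ℝ) * (ω (n - i + q) - ω (n - i) - (m (n - i) : ℝ))|
        ≤ (A - 1) * ε' := by
      have h1 : ∀ i ∈ Finset.Icc 1 k,
          |(a i : ℝ) * (ω (n - i + q) - ω (n - i) - (m (n - i) : ℝ))| ≤ |(a i : ℝ)| * ε' := by
        intro i hi
        simp only [Finset.mem_Icc] at hi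
        rw [abs_mul]
        exact mul_le_mul_of_nonneg_left (hδ (n - i) (by omega)).le (abs_nonneg _)
      calc ∑ i ∈ Finset.Icc 1 k, |(a i : ℝ) * (ω (n - i + q) - ω (n - i) - (m (n - i) : ℝ))|
          ≤ ∑ i ∈ Finset.Icc 1 k, |(a i : ℝ)| * ε' := Finset.sum_le_sum h1
        _ = (∑ i ∈ Finset.Icc 1 k, |(a i : ℝ)|) * ε' := by rw [Finset.sum_mul]
        _ = (A - 1) * ε' := by rw [hA_def]; ring_nf
    have hT : |((m n + ∑ i ∈ Finset.Icc 1 k, a i * m (n - i) : ℤ) : ℝ)| < 1 := by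
      rw [hTr, abs_neg]
      have hA' : A * ε' ≤ 1 / 2 := by
        have h1 : ε' ≤ 1 / (2 * A) := min_le_left _ _
        have h2 : A * ε' ≤ A * (1 / (2 * A)) := mul_le_mul_of_nonneg_left h1 hA0.le
        have h3 : A * (1 / (2 * A)) = 1 / 2 := by field_simp
        linarith
      calc |(ω (n + q) - ω n - (m n : ℝ))
            + ∑ i ∈ Finset.Icc 1 k, (a i : ℝ) * (ω (n - i + q) - ω (n - i) - (m (n - i) : ℝ))|
          ≤ |ω (n + q) - ω n - (m n : ℝ)|
            + |∑ i ∈ Finset.Icc 1 k, (a i : ℝ) * (ω (n - i + q) - ω (n - i) - (m (n - i) : ℝ))| :=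
            abs_add_le _ _
        _ ≤ |ω (n + q) - ω n - (m n : ℝ)|
            + ∑ i ∈ Finset.Icc 1 k, |(a i : ℝ) * (ω (n - i + q) - ω (n - i) - (m (n - i) : ℝ))| := by
            have := Finset.abs_sum_le_sum_abs
              (fun i => (a i : ℝ) * (ω (n - i + q) - ω (n - i) - (m (n - i) : ℝ))) (Finset.Icc 1 k)
            linarith
        _ < ε' + (A - 1) * ε' := by linarith
        _ = A * ε' := by ring
        _ ≤ 1 / 2 := hA'
        _ < 1 := by norm_num
    have hTz : |m n + ∑ i ∈ Finset.Icc 1 k, a i * m (n - i)| < 1 := by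
      have := hT
      rw [← Int.cast_abs] at this
      exact_mod_cast this
    have habs := abs_lt.mp hTz
    omega
  -- periodicity
  have hNbig : 2 * d ^ k + 2 * k ≤ N := by
    have h1 : (R+1) * s + 2 * d ^ k + 2 * k ≤ ((R+1) * s + 2 * d ^ k + 2 * k) * q :=
      Nat.le_mul_of_pos_right _ hq0
    omega
  obtain ⟨p, hp0, hpk, hPer⟩ := core_period d k N hd hk a hak' m hNbig hmrec
  have hIter : ∀ T n, n + T * p + k ≤ N → (m (n + T * p) : ZMod d) = (m n : ZMod d) := by
    intro T
    induction T with
    | zero => intro n _; simp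
    | succ T ih =>
      intro n h
      have e : (T + 1) * p = T * p + p := by ring
      rw [e] at h ⊢
      rw [show n + (T * p + p) = (n + T * p) + p from by omega]
      rw [hPer (n + T * p) (by omega)]
      exact ih n (by omega)
  -- key step: for each base point, the sum of s consecutive m-values is divisible by d
  have key : ∀ n0, n0 ≤ R * (s * q) → ∃ M : ℤ, (d:ℤ) ∣ M ∧
      |ω (n0 + s * q) - ω n0 - (M : ℝ)| < (s:ℝ) * ε' := by
    intro n0 hn0
    have hNsplit : N = R * (s * q) + s * q + (2 * d ^ k + 2 * k) * q := by
      rw [hN_def]; ring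
    have hkq : k ≤ (2 * d ^ k + 2 * k) * q := by
      have h1 : 2 * d ^ k + 2 * k ≤ (2 * d ^ k + 2 * k) * q := Nat.le_mul_of_pos_right _ hq0
      omega
    have hjN : ∀ j, j < s → n0 + j * q + q ≤ N := by
      intro j hj
      have e1 : (j + 1) * q = j * q + q := by ring
      have h1 : (j + 1) * q ≤ s * q := Nat.mul_le_mul_right q (by omega)
      omega
    refine ⟨∑ j ∈ Finset.range s, m (n0 + j * q), ?_, ?_⟩
    · -- divisibility
      have h0 : ((∑ j ∈ Finset.range s, m (n0 + j * q) : ℤ) : ZMod d) = 0 := by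
        push_cast
        have hcongr : ∀ j ∈ Finset.range s,
            ((m (n0 + j * q) : ZMod d)) = (fun t => (m (n0 + t * q) : ZMod d)) (j % p) := by
          intro j hj
          simp only [Finset.mem_range] at hj
          simp only
          have hmod := Nat.mod_add_div j p
          have e2 : j % p * q + j / p * q * p = j * q := by
            calc j % p * q + j / p * q * p = (j % p + p * (j / p)) * q := by ring
              _ = j * q := by rw [hmod]
          have e1 : n0 + (j % p) * q + (j / p * q) * p = n0 + j * q := by omega
          have hrange2 : n0 + (j % p) * q + (j / p * q) * p + k ≤ N := by
            rw [e1]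
            have e3 : (j + 1) * q = j * q + q := by ring
            have h4 : (j + 1) * q ≤ s * q := Nat.mul_le_mul_right q (by omega)
            omega
          have h := hIter (j / p * q) (n0 + (j % p) * q) hrange2
          rw [e1] at h
          rw [h]
        rw [Finset.sum_congr rfl hcongr]
        have hpP : p ∣ P := Nat.dvd_factorial hp0 hpk
        have hsc : s = (d * (P / p)) * p := by
          rw [hs_def, mul_assoc, Nat.div_mul_cancel hpP]
        rw [hsc, sum_mod_smul (fun t => ((m (n0 + t * q) : ℤ) : ZMod d)) p (d * (P / p))]
        rw [nsmul_eq_mul]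
        push_cast
        rw [ZMod.natCast_self]
        ring
      exact (ZMod.intCast_zmod_eq_zero_iff_dvd _ d).mp h0
    · -- size bound
      have htel : ω (n0 + s * q) - ω n0
          = ∑ j ∈ Finset.range s, (ω (n0 + j * q + q) - ω (n0 + j * q)) := by
        have h := Finset.sum_range_sub (fun j => ω (n0 + j * q)) s
        simp only [Nat.zero_mul, Nat.add_zero] at h
        rw [← h]
        refine Finset.sum_congr rfl fun j hj => ?_
        rw [show n0 + (j + 1) * q = n0 + j * q + q from by ring]
      have hcast : ((∑ j ∈ Finset.range s, m (n0 + j * q) : ℤ) : ℝ)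
          = ∑ j ∈ Finset.range s, ((m (n0 + j * q) : ℝ)) := by push_cast; rfl
      rw [htel, hcast, ← Finset.sum_sub_distrib]
      have hterm : ∀ j ∈ Finset.range s,
          |ω (n0 + j * q + q) - ω (n0 + j * q) - (m (n0 + j * q) : ℝ)| < ε' := by
        intro j hj
        simp only [Finset.mem_range] at hj
        exact hδ (n0 + j * q) (by have := hjN j hj; omega)
      calc |∑ j ∈ Finset.range s, (ω (n0 + j * q + q) - ω (n0 + j * q) - (m (n0 + j * q) : ℝ))|
          ≤ ∑ j ∈ Finset.range s, |ω (n0 + j * q + q) - ω (n0 + j * q) - (m (n0 + j * q) : ℝ)| :=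
            Finset.abs_sum_le_sum_abs _ _
        _ < ∑ _j ∈ Finset.range s, ε' :=
            Finset.sum_lt_sum_of_nonempty (Finset.nonempty_range_iff.mpr hs.ne') hterm
        _ = (s:ℝ) * ε' := by rw [Finset.sum_const, Finset.card_range, nsmul_eq_mul]
  refine ⟨s * q, Nat.mul_pos hs hq0, ?_, ?_⟩
  · intro n0 hn0
    obtain ⟨M, hdM, hΔ⟩ := key n0 hn0
    simp only
    rw [dist_comm, dist_eq_norm, ← QuotientAddGroup.mk_sub, UnitAddCircle.norm_eq]
    calc |ω (n0 + s * q) - ω n0 - (round (ω (n0 + s * q) - ω n0) : ℝ)|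
        ≤ |ω (n0 + s * q) - ω n0 - (M : ℝ)| := round_le _ M
      _ < (s:ℝ) * ε' := hΔ
      _ ≤ E / 2 := hbound1
      _ < ε := by linarith
  · intro n0 hn0
    obtain ⟨M, ⟨e, he⟩, hΔ⟩ := key n0 hn0
    simp only
    rw [dist_comm, dist_eq_norm, ← QuotientAddGroup.mk_sub, UnitAddCircle.norm_eq]
    have hr : (r:ℝ) = (c:ℝ) / (d:ℝ) := by
      rw [Rat.cast_def, ← hc_def, ← hd_def]
    have hx : (r:ℝ) * ω (n0 + s * q) - (r:ℝ) * ω n0 - ((c * e : ℤ) : ℝ)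
        = (r:ℝ) * (ω (n0 + s * q) - ω n0 - (M : ℝ)) := by
      rw [hr, he]
      push_cast
      field_simp
    have hrC : |(r:ℝ)| ≤ C / d := by
      rw [hr, abs_div]
      rw [show |(d:ℝ)| = (d:ℝ) from abs_of_nonneg hdR.le]
      gcongr
    calc |(r:ℝ) * ω (n0 + s * q) - (r:ℝ) * ω n0
          - (round ((r:ℝ) * ω (n0 + s * q) - (r:ℝ) * ω n0) : ℝ)|
        ≤ |(r:ℝ) * ω (n0 + s * q) - (r:ℝ) * ω n0 - ((c * e : ℤ) : ℝ)| := round_le _ (c * e)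
      _ = |(r:ℝ)| * |ω (n0 + s * q) - ω n0 - (M : ℝ)| := by rw [hx, abs_mul]
      _ ≤ (C / d) * |ω (n0 + s * q) - ω n0 - (M : ℝ)| :=
          mul_le_mul_of_nonneg_right hrC (abs_nonneg _)
      _ < (C / d) * ((s:ℝ) * ε') := by
          exact mul_lt_mul_of_pos_left hΔ (by positivity)
      _ ≤ E / 2 := hbound2
      _ < ε := by linarith
end

section
/- For any real a and integer k ≥ 1: if there exists a sequence of positive integers q_m → ∞ with q_m^{k−1} ⟨a q_m⟩ → 0, then the sequence n ↦ a n^k mod 1 in 𝕋 has the repetition property. -/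
open Filter MeasureTheory

theorem stmt15 (a : ℝ) (k : ℕ) (hk : 1 ≤ k) (q : ℕ → ℕ) (hq : ∀ m, 0 < q m)
    (hqtop : Tendsto q atTop atTop)
    (h0 : Tendsto (fun m => (q m : ℝ) ^ (k - 1) * ‖(((q m : ℝ) * a : ℝ) : UnitAddCircle)‖)
      atTop (nhds 0)) :
    HasRP (fun n => ((a * (n : ℝ) ^ k : ℝ) : UnitAddCircle)) := by
  intro ε hε r hr
  set C : ℝ := (k : ℝ) * ((r : ℝ) + 1) ^ (k - 1) with hC
  have hCpos : 0 < C := by positivity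
  have hlim : Tendsto (fun m => C * ((q m : ℝ) ^ (k - 1) *
      ‖(((q m : ℝ) * a : ℝ) : UnitAddCircle)‖)) atTop (nhds 0) := by
    simpa using h0.const_mul C
  obtain ⟨m, hm⟩ := (hlim.eventually (gt_mem_nhds hε)).exists
  set Q : ℕ := q m with hQdef
  refine ⟨Q, hq m, fun n hn => ?_⟩
  set S : ℕ := ∑ i ∈ Finset.range k, (n + Q) ^ i * n ^ (k - 1 - i) with hS
  -- key algebraic identity
  have hid : a * ((n + Q : ℕ) : ℝ) ^ k - a * (n : ℝ) ^ k = (S : ℝ) * ((Q : ℝ) * a) := by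
    have h := geom_sum₂_mul ((n : ℝ) + (Q : ℝ)) (n : ℝ) k
    have hcast : (S : ℝ) = ∑ i ∈ Finset.range k, ((n : ℝ) + (Q : ℝ)) ^ i * (n : ℝ) ^ (k - 1 - i) := by
      push_cast [hS]
      rfl
    push_cast
    rw [hcast]
    linear_combination (-a) * h
  -- move to the circle
  have hcirc : ((a * ((n + Q : ℕ) : ℝ) ^ k : ℝ) : UnitAddCircle) - ((a * (n : ℝ) ^ k : ℝ) : UnitAddCircle)
      = S • (((Q : ℝ) * a : ℝ) : UnitAddCircle) := by
    rw [← AddCircle.coe_sub, hid, ← nsmul_eq_mul, AddCircle.coe_nsmul]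
  have hdist : dist ((a * (n : ℝ) ^ k : ℝ) : UnitAddCircle)
      ((a * ((n + Q : ℕ) : ℝ) ^ k : ℝ) : UnitAddCircle) ≤ (S : ℝ) * ‖(((Q : ℝ) * a : ℝ) : UnitAddCircle)‖ := by
    rw [dist_comm, dist_eq_norm, hcirc]
    exact norm_nsmul_le
  -- bound S
  have hSle : (S : ℝ) ≤ C * (Q : ℝ) ^ (k - 1) := by
    have h1 : S ≤ k * (((r + 1) * Q) ^ (k - 1)) := by
      calc S ≤ ∑ _i ∈ Finset.range k, ((r + 1) * Q) ^ (k - 1) := by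
              apply Finset.sum_le_sum
              intro i hi
              have hik : i ≤ k - 1 := Nat.le_sub_one_of_lt (Finset.mem_range.mp hi)
              have hnQ : n + Q ≤ (r + 1) * Q := by
                rw [add_mul, one_mul]; exact Nat.add_le_add_right hn Q
              calc (n + Q) ^ i * n ^ (k - 1 - i) ≤ ((r + 1) * Q) ^ i * ((r + 1) * Q) ^ (k - 1 - i) :=
                    Nat.mul_le_mul (Nat.pow_le_pow_left hnQ i)
                      (Nat.pow_le_pow_left (le_trans (Nat.le_add_right n Q) hnQ) _)
                _ = ((r + 1) * Q) ^ (k - 1) := by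
                    rw [← pow_add]; congr 1; omega
        _ = k * (((r + 1) * Q) ^ (k - 1)) := by simp [Finset.sum_const, Finset.card_range]
    have := (Nat.cast_le (α := ℝ)).mpr h1
    push_cast at this
    calc (S : ℝ) ≤ (k : ℝ) * (((r : ℝ) + 1) * (Q : ℝ)) ^ (k - 1) := this
      _ = C * (Q : ℝ) ^ (k - 1) := by rw [mul_pow, hC]; ring
  have hnorm_nonneg : (0:ℝ) ≤ ‖(((Q : ℝ) * a : ℝ) : UnitAddCircle)‖ := norm_nonneg _
  calc dist ((a * (n : ℝ) ^ k : ℝ) : UnitAddCircle) ((a * ((n + Q : ℕ) : ℝ) ^ k : ℝ) : UnitAddCircle)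
      ≤ (S : ℝ) * ‖(((Q : ℝ) * a : ℝ) : UnitAddCircle)‖ := hdist
    _ ≤ (C * (Q : ℝ) ^ (k - 1)) * ‖(((Q : ℝ) * a : ℝ) : UnitAddCircle)‖ :=
        mul_le_mul_of_nonneg_right hSle hnorm_nonneg
    _ = C * ((Q : ℝ) ^ (k - 1) * ‖(((Q : ℝ) * a : ℝ) : UnitAddCircle)‖) := by ring
    _ < ε := hm
end

section
/- Let T : 𝕋^k → 𝕋^k with k ≥ 3 be the skew-shift T(ω_1,...,ω_k) = (ω_1 + α, ω_2 + ω_1, ..., ω_k + ω_{k−1}) with α irrational. Then PRP(T) ≠ 𝕋^k, i.e., there exists ω ∈ 𝕋^k whose orbit {T^n ω} does not have the repetition property; in particular T does not have the global repetition property. -/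
open Filter MeasureTheory

/-- The skew-shift on the k-dimensional torus. -/
noncomputable def skewShift (k : ℕ) (α : UnitAddCircle) (ω : Fin k → UnitAddCircle) : Fin k → UnitAddCircle :=
  fun j => if h : (j : ℕ) = 0 then ω j + α else ω j + ω ⟨(j : ℕ) - 1, by have := j.isLt; omega⟩

/-- The orbit of ω under T has the repetition property, w.r.t. the sum metric on the torus. -/
def OrbitRP (k : ℕ) (T : (Fin k → UnitAddCircle) → Fin k → UnitAddCircle)
    (ω : Fin k → UnitAddCircle) : Prop :=
  ∀ ε > 0, ∀ r : ℕ, 0 < r → ∃ q : ℕ, 0 < q ∧ ∀ n ≤ r * q,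
    ∑ j : Fin k, dist (T^[n] ω j) (T^[n + q] ω j) < ε

/-! ### Auxiliary machinery -/

/-- Sum 0 + 1 + ⋯ + (n-1). -/
private def ss1 : ℕ → ℕ
  | 0 => 0
  | n+1 => ss1 n + n

/-- Iterated sum of `ss1`. -/
private def ss2 : ℕ → ℕ
  | 0 => 0
  | n+1 => ss2 n + ss1 n

private lemma ss1_closed (n : ℕ) : 2*(ss1 n : ℝ) = (n:ℝ)^2 - n := by
  induction n with
  | zero => simp [ss1]
  | succ n ih => push_cast [ss1]; push_cast at ih; ring_nf; ring_nf at ih; nlinarith [ih]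

/-- The golden ratio. -/
noncomputable def gold : ℝ := (1 + Real.sqrt 5) / 2

/-- The golden ratio is badly approximable. -/
lemma gold_lb (m : ℕ) (hm : 1 ≤ m) (p : ℤ) : 1/(5*(m:ℝ)) < |(m:ℝ) * gold - p| := by
  have hs2 : Real.sqrt 5 ^ 2 = 5 := Real.sq_sqrt (by norm_num)
  have hsb : 2 < Real.sqrt 5 ∧ Real.sqrt 5 < 3 := by
    constructor <;> nlinarith [Real.sqrt_nonneg 5]
  have hirr : Irrational (Real.sqrt 5) := by
    rw [show ((5:ℝ) = ((5:ℕ):ℝ)) by norm_num, irrational_sqrt_natCast_iff]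
    intro ⟨r, hr⟩
    rcases Nat.lt_or_ge r 3 with h | h
    · interval_cases r <;> omega
    · nlinarith
  set s := Real.sqrt 5
  by_contra hcon
  push_neg at hcon
  set u : ℝ := (m:ℝ) * gold - p with hu
  have hm1 : (1:ℝ) ≤ m := by exact_mod_cast hm
  have key : u * (u - m*s) = ((p^2 - m*p - m^2 : ℤ) : ℝ) := by
    push_cast
    simp only [hu, gold]
    ring_nf
    nlinarith [hs2]
  have hne : (p^2 - (m:ℤ)*p - (m:ℤ)^2 : ℤ) ≠ 0 := by
    intro h0
    have h5 : ((2*p - m)^2 : ℤ) = 5 * m^2 := by linear_combination 4*h0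
    apply hirr
    refine ⟨((2*p - m).natAbs : ℚ) / (m : ℚ), ?_⟩
    have h5R : ((2*p - (m:ℤ)).natAbs : ℝ)^2 = 5 * (m:ℝ)^2 := by
      rw [Nat.cast_natAbs]
      push_cast
      rw [sq_abs]
      have h5' := congrArg (fun z : ℤ => (z : ℝ)) h5
      push_cast at h5' ⊢
      linarith
    have hsq : ((2*p - (m:ℤ)).natAbs : ℝ)^2 = (s * m)^2 := by
      rw [h5R]
      nlinarith [hs2]
    rw [sq_eq_sq_iff_abs_eq_abs,
      abs_of_nonneg (Nat.cast_nonneg (α := ℝ) (2*p - (m:ℤ)).natAbs),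
      abs_of_nonneg (by nlinarith [hsb.1] : (0:ℝ) ≤ s * m)] at hsq
    have : ((2*p - (m:ℤ)).natAbs : ℝ) = s * m := hsq
    push_cast
    rw [this]
    field_simp
  have h1 : (1:ℝ) ≤ |u * (u - m*s)| := by
    rw [key]
    exact_mod_cast Int.one_le_abs hne
  have hub : |u - m*s| ≤ |u| + m*s := by
    have h2 : |(m:ℝ)*s| = m*s := abs_of_nonneg (by nlinarith [hsb.1])
    calc |u - m*s| ≤ |u| + |(m:ℝ)*s| := abs_sub u _
      _ = |u| + m*s := by rw [h2]
  have habs : |u * (u - m*s)| ≤ (1/(5*m)) * (|u| + m*s) := by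
    rw [abs_mul]
    apply mul_le_mul hcon hub (abs_nonneg _) (by positivity)
  have e : (1/(5*(m:ℝ))) * (|u| + m*s) = |u|/(5*m) + s/5 := by
    field_simp
  have h5m : (5:ℝ) ≤ 5*m := by linarith
  have hu5 : |u| ≤ 1/5 := le_trans hcon (by
    apply one_div_le_one_div_of_le <;> linarith)
  have hd : |u|/(5*m) ≤ 1/5/5 := div_le_div₀ (by norm_num) hu5 (by norm_num) h5m
  rw [e] at habs
  linarith [h1, habs, hd, hsb.2]

private lemma skew_orbit (k : ℕ) (hk : 3 ≤ k) (α β : ℝ) (n : ℕ) :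
    (skewShift k (α : UnitAddCircle))^[n]
      (fun j => if (j:ℕ) = 0 then (β : UnitAddCircle) else 0) ⟨0, by omega⟩
        = ((β + n*α : ℝ) : UnitAddCircle) ∧
    (skewShift k (α : UnitAddCircle))^[n]
      (fun j => if (j:ℕ) = 0 then (β : UnitAddCircle) else 0) ⟨1, by omega⟩
        = ((n*β + ss1 n*α : ℝ) : UnitAddCircle) ∧
    (skewShift k (α : UnitAddCircle))^[n]
      (fun j => if (j:ℕ) = 0 then (β : UnitAddCircle) else 0) ⟨2, by omega⟩
        = ((ss1 n*β + ss2 n*α : ℝ) : UnitAddCircle) := by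
  induction n with
  | zero =>
    refine ⟨?_, ?_, ?_⟩ <;> simp [ss1, ss2]
  | succ n ih =>
    obtain ⟨h0, h1, h2⟩ := ih
    rw [Function.iterate_succ_apply']
    refine ⟨?_, ?_, ?_⟩
    · show (skewShift k _ _) ⟨0, by omega⟩ = _
      rw [skewShift, dif_pos rfl, h0]
      rw [← AddCircle.coe_add]
      congr 1
      push_cast
      ring
    · show (skewShift k _ _) ⟨1, by omega⟩ = _
      rw [skewShift, dif_neg (by simp)]
      have : (⟨(1:ℕ) - 1, by omega⟩ : Fin k) = ⟨0, by omega⟩ := rfl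
      rw [this, h0, h1, ← AddCircle.coe_add]
      congr 1
      push_cast [ss1]
      ring
    · show (skewShift k _ _) ⟨2, by omega⟩ = _
      rw [skewShift, dif_neg (by simp)]
      have : (⟨(2:ℕ) - 1, by omega⟩ : Fin k) = ⟨1, by omega⟩ := rfl
      rw [this, h1, h2, ← AddCircle.coe_add]
      congr 1
      push_cast [ss1, ss2]
      ring

/-- Two reals congruent mod ℤ and jointly closer than 1 are equal. -/
private lemma near_eq {x y : ℝ} {z : ℤ} (h : x - y = (z:ℝ)) (hxy : |x| + |y| < 1) : x = y := by
  have hz : |(z:ℝ)| < 1 := by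
    rw [← h]
    exact lt_of_le_of_lt (abs_sub x y) hxy
  have hz0 : z = 0 := by
    have h1 : |z| < 1 := by exact_mod_cast hz
    rw [abs_lt] at h1
    omega
  rw [hz0] at h
  push_cast at h
  linarith

private lemma dist_coe (x y : ℝ) :
    dist (x : UnitAddCircle) (y : UnitAddCircle) = |(x - y) - round (x - y)| := by
  rw [dist_eq_norm, ← UnitAddCircle.norm_eq]
  norm_cast

set_option maxHeartbeats 2000000 in
theorem stmt18 (k : ℕ) (hk : 3 ≤ k) (α : ℝ) (hα : Irrational α) :
    ∃ ω : Fin k → UnitAddCircle, ¬ OrbitRP k (skewShift k (α : UnitAddCircle)) ω := by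
  set ω : Fin k → UnitAddCircle := fun j => if (j:ℕ) = 0 then (gold : UnitAddCircle) else 0 with hω
  refine ⟨ω, fun hRP => ?_⟩
  obtain ⟨q, hq, H⟩ := hRP (1/1000) (by norm_num) 2 (by norm_num)
  have horb := fun n => skew_orbit k hk α gold n
  have key : ∀ (i : Fin k), ∀ n, n ≤ 2*q →
      dist ((skewShift k (α:UnitAddCircle))^[n] ω i)
        ((skewShift k (α:UnitAddCircle))^[n+q] ω i) < 1/1000 := by
    intro i n hn
    refine lt_of_le_of_lt ?_ (H n hn)
    exact Finset.single_le_sum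
      (f := fun j => dist ((skewShift k (α:UnitAddCircle))^[n] ω j)
        ((skewShift k (α:UnitAddCircle))^[n+q] ω j))
      (fun j _ => dist_nonneg) (Finset.mem_univ i)
  -- real lifts of coordinates 1 and 2 of the orbit-difference
  obtain ⟨a, hadef⟩ : ∃ f : ℕ → ℝ,
      f = fun n => ((n+q : ℕ):ℝ)*gold + (ss1 (n+q):ℝ)*α - ((n:ℝ)*gold + (ss1 n:ℝ)*α) := ⟨_, rfl⟩
  obtain ⟨b, hbdef⟩ : ∃ f : ℕ → ℝ,
      f = fun n => (ss1 (n+q):ℝ)*gold + (ss2 (n+q):ℝ)*α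
        - ((ss1 n:ℝ)*gold + (ss2 n:ℝ)*α) := ⟨_, rfl⟩
  have ha : ∀ n, n ≤ 2*q → |a n - round (a n)| < 1/1000 := by
    intro n hn
    have h := key ⟨1, by omega⟩ n hn
    rw [dist_comm, (horb n).2.1, (horb (n+q)).2.1, dist_coe] at h
    rw [hadef]
    exact h
  have hb : ∀ n, n ≤ 2*q → |b n - round (b n)| < 1/1000 := by
    intro n hn
    have h := key ⟨2, by omega⟩ n hn
    rw [dist_comm, (horb n).2.2, (horb (n+q)).2.2, dist_coe] at h
    rw [hbdef]
    exact h
  have harec : ∀ n : ℕ, a (n+1) - a n = q*α := by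
    intro n
    simp only [hadef]
    have e1 : n+1+q = (n+q)+1 := by omega
    rw [e1]
    push_cast [ss1]
    ring
  have hbrec : ∀ n : ℕ, b (n+1) - b n = a n := by
    intro n
    simp only [hadef, hbdef]
    have e1 : n+1+q = (n+q)+1 := by omega
    rw [e1]
    push_cast [ss1, ss2]
    ring
  have e0 : a 1 - a 0 = q*α := by
    have := harec 0
    norm_num at this
    exact this
  obtain ⟨δ, hδdef⟩ : ∃ d : ℝ, d = (a 1 - round (a 1)) - (a 0 - round (a 0)) := ⟨_, rfl⟩
  have hδb : |δ| < 2/1000 := by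
    rw [hδdef]
    have h0 := ha 0 (by omega)
    have h1 := ha 1 (by omega)
    have := abs_sub (a 1 - round (a 1)) (a 0 - round (a 0))
    linarith
  have hstepA : ∀ n, n ≤ 2*q → a n - round (a n) = (a 0 - round (a 0)) + n * δ := by
    intro n
    induction n with
    | zero => intro _; simp
    | succ n ih =>
      intro hn1
      have hn : n ≤ 2*q := by omega
      have ihn := ih hn
      have hz : (a (n+1) - round (a (n+1))) - ((a n - round (a n)) + δ)
          = (((round (a n) - round (a (n+1))) - (round (a 0) - round (a 1)) : ℤ) : ℝ) := by
        have e1 := harec n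
        rw [hδdef]
        push_cast
        linarith
      have hbound : |a (n+1) - round (a (n+1))| + |(a n - round (a n)) + δ| < 1 := by
        have hx := ha (n+1) hn1
        have hy := ha n hn
        have := abs_add_le (a n - round (a n)) δ
        linarith
      have heq := near_eq hz hbound
      rw [heq, ihn]
      push_cast
      ring
  have hstepB : ∀ n, n ≤ 2*q →
      b n - round (b n) = (b 0 - round (b 0)) + n * (a 0 - round (a 0)) + (ss1 n : ℝ) * δ := by
    intro n
    induction n with
    | zero => intro _; simp [ss1]
    | succ n ih =>
      intro hn1
      have hn : n ≤ 2*q := by omega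
      have ihn := ih hn
      have hz : (b (n+1) - round (b (n+1))) - ((b n - round (b n)) + (a n - round (a n)))
          = (((round (b n) - round (b (n+1))) + round (a n) : ℤ) : ℝ) := by
        have e1 := hbrec n
        push_cast
        linarith
      have hbound : |b (n+1) - round (b (n+1))| + |(b n - round (b n)) + (a n - round (a n))| < 1 := by
        have hx := hb (n+1) hn1
        have hy := hb n hn
        have hy2 := ha n hn
        have := abs_add_le (b n - round (b n)) (a n - round (a n))
        linarith
      have heq := near_eq hz hbound
      rw [heq, ihn, hstepA n hn]
      push_cast [ss1]
      ring
  have hqR : (1:ℝ) ≤ q := by exact_mod_cast hq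
  have hqpos : (0:ℝ) < q := by linarith
  -- second difference gives |δ| < 4ε/q²
  have eq_q := hstepB q (by omega)
  have eq_2q := hstepB (2*q) le_rfl
  have hss_q := ss1_closed q
  have hss_2q : (ss1 (2*q) : ℝ) = 2*(q:ℝ)^2 - q := by
    have := ss1_closed (2*q)
    push_cast at this
    linarith
  have hqd : |(q:ℝ)^2 * δ| < 4/1000 := by
    have comb : (q:ℝ)^2*δ = (b (2*q) - round (b (2*q))) - 2*(b q - round (b q))
        + (b 0 - round (b 0)) := by
      rw [eq_2q, eq_q, hss_2q]
      push_cast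
      linear_combination δ * hss_q
    rw [comb]
    have h0 := hb 0 (by omega)
    have h1 := hb q (by omega)
    have h2 := hb (2*q) le_rfl
    calc |(b (2*q) - round (b (2*q))) - 2*(b q - round (b q)) + (b 0 - round (b 0))|
        ≤ |(b (2*q) - round (b (2*q))) - 2*(b q - round (b q))| + |b 0 - round (b 0)| :=
          abs_add_le _ _
      _ ≤ |b (2*q) - round (b (2*q))| + 2*|b q - round (b q)| + |b 0 - round (b 0)| := by
          have := abs_sub (b (2*q) - round (b (2*q))) (2*(b q - round (b q)))
          rw [abs_mul] at this
          simp only [abs_two] at this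
          linarith
      _ < 4/1000 := by linarith
  have hδq : (q:ℝ)^2 * |δ| < 4/1000 := by
    rwa [abs_mul, abs_of_nonneg (sq_nonneg _)] at hqd
  -- bound on |a 0 - round (a 0)|
  have ha0 : 2*(q:ℝ) * |a 0 - round (a 0)| < 10/1000 := by
    have e : 2*(q:ℝ)*(a 0 - round (a 0)) = (b (2*q) - round (b (2*q))) - (b 0 - round (b 0))
        - (ss1 (2*q) : ℝ)*δ := by
      rw [eq_2q]
      push_cast
      ring
    have hsd : |(ss1 (2*q) : ℝ)*δ| < 8/1000 := by
      rw [abs_mul, abs_of_nonneg (by rw [hss_2q]; nlinarith : (0:ℝ) ≤ (ss1 (2*q):ℝ)), hss_2q]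
      have h2 : (2*(q:ℝ)^2 - q) * |δ| ≤ 2*(q:ℝ)^2 * |δ| := by
        nlinarith [abs_nonneg δ]
      nlinarith [hδq]
    have h0 := hb 0 (by omega)
    have h2 := hb (2*q) le_rfl
    calc 2*(q:ℝ) * |a 0 - round (a 0)| = |2*(q:ℝ)*(a 0 - round (a 0))| := by
          rw [abs_mul, abs_of_nonneg (by linarith : (0:ℝ) ≤ 2*(q:ℝ))]
      _ = |(b (2*q) - round (b (2*q))) - (b 0 - round (b 0)) - (ss1 (2*q) : ℝ)*δ| := by rw [e]
      _ ≤ |b (2*q) - round (b (2*q))| + |b 0 - round (b 0)| + |(ss1 (2*q) : ℝ)*δ| := by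
          have t1 := abs_sub ((b (2*q) - round (b (2*q))) - (b 0 - round (b 0)))
            ((ss1 (2*q) : ℝ)*δ)
          have t2 := abs_sub (b (2*q) - round (b (2*q))) (b 0 - round (b 0))
          linarith
      _ < 10/1000 := by linarith
  -- a 0 = q·gold + ss1 q · α
  have ea0 : a 0 = (q:ℝ)*gold + (ss1 q : ℝ)*α := by
    simp only [hadef]
    norm_num [ss1]
  -- δ = qα + integer
  have hδint : δ = (q:ℝ)*α + ((round (a 0) : ℤ) : ℝ) - ((round (a 1) : ℤ) : ℝ) := by
    rw [hδdef]
    linarith [e0]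
  -- assemble: 2q·gold - p = 2(a0 - ra0) - (q-1)δ
  obtain ⟨p, hpdef⟩ : ∃ z : ℤ, z = 2*round (a 0) + ((q:ℤ)-1)*(round (a 0) - round (a 1)) :=
    ⟨_, rfl⟩
  have hfin : 2*(q:ℝ)*gold - (p:ℝ) = 2*(a 0 - round (a 0)) - ((q:ℝ)-1)*δ := by
    rw [hpdef]
    push_cast
    linear_combination (-2)*ea0 + ((q:ℝ)-1)*hδint + (-α)*hss_q
  have hfinb : |2*(q:ℝ)*gold - (p:ℝ)| < 14/1000/(q:ℝ) := by
    rw [hfin]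
    have t1 : |2*(a 0 - round (a 0))| < 10/1000/(q:ℝ) := by
      rw [abs_mul, abs_two, lt_div_iff₀ hqpos]
      nlinarith [ha0]
    have t2 : |((q:ℝ)-1)*δ| ≤ (q:ℝ)*|δ| := by
      rw [abs_mul]
      have : |(q:ℝ)-1| ≤ (q:ℝ) := by
        rw [abs_le]; constructor <;> linarith
      nlinarith [abs_nonneg δ]
    have t3 : (q:ℝ)*|δ| < 4/1000/(q:ℝ) := by
      rw [lt_div_iff₀ hqpos]
      nlinarith [hδq]
    calc |2*(a 0 - round (a 0)) - ((q:ℝ)-1)*δ|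
        ≤ |2*(a 0 - round (a 0))| + |((q:ℝ)-1)*δ| := abs_sub _ _
      _ < 14/1000/(q:ℝ) := by
          have hsum : 10/1000/(q:ℝ) + 4/1000/(q:ℝ) = 14/1000/(q:ℝ) := by ring
          linarith
  have hlb := gold_lb (2*q) (by omega) p
  have hcast : ((2*q : ℕ):ℝ) = 2*(q:ℝ) := by push_cast; ring
  rw [hcast] at hlb
  have : 1/(5*(2*(q:ℝ))) < 14/1000/(q:ℝ) := lt_trans hlb hfinb
  rw [div_lt_div_iff₀ (by positivity) hqpos] at this
  nlinarith [this]
end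

section
/- Let T : 𝕋^k → 𝕋^k with k ≥ 4 be the skew-shift T(ω_1,...,ω_k) = (ω_1 + α, ω_2 + ω_1, ..., ω_k + ω_{k−1}) with α irrational. Then the set PRP(T) of points whose orbit has the repetition property has Lebesgue measure zero; in particular T does not have the metric repetition property relative to Lebesgue measure. -/
open Filter MeasureTheory

/-! ### Distance to the nearest integer -/

/-- The distance from a real number to the nearest integer. -/
noncomputable def NI (x : ℝ) : ℝ := |x - round x|

lemma NI_def (x : ℝ) : NI x = |x - round x| := rfl

lemma NI_nonneg (x : ℝ) : 0 ≤ NI x := abs_nonneg _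

lemma NI_le (x : ℝ) (k : ℤ) : NI x ≤ |x - k| := round_le x k

lemma NI_le_abs (x : ℝ) : NI x ≤ |x| := by simpa using NI_le x 0

lemma NI_add_int (x : ℝ) (k : ℤ) : NI (x + k) = NI x := by
  refine le_antisymm ?_ ?_
  · have := NI_le (x + k) (round x + k)
    rwa [show x + (k:ℝ) - ((round x + k : ℤ) : ℝ) = x - round x by push_cast; ring] at this
  · have := NI_le x (round (x + (k:ℝ)) - k)
    rwa [show x - ((round (x + (k:ℝ)) - k : ℤ) : ℝ) = x + k - round (x + (k:ℝ)) by push_cast; ring] at this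

lemma NI_neg (x : ℝ) : NI (-x) = NI x := by
  have key : ∀ y : ℝ, NI (-y) ≤ NI y := by
    intro y
    have := NI_le (-y) (-round y)
    rwa [show -y - ((-round y : ℤ) : ℝ) = -(y - round y) by push_cast; ring, abs_neg] at this
  refine le_antisymm (key x) ?_
  have := key (-x); rwa [neg_neg] at this

lemma NI_add_le (x y : ℝ) : NI (x + y) ≤ NI x + NI y := by
  have h := NI_le (x + y) (round x + round y)
  refine h.trans ?_
  rw [show x + y - ((round x + round y : ℤ) : ℝ) = (x - round x) + (y - round y) by push_cast; ring]
  exact abs_add_le _ _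

lemma NI_sub_le (x y : ℝ) : NI (x - y) ≤ NI x + NI y := by
  simpa [sub_eq_add_neg, NI_neg] using NI_add_le x (-y)

lemma NI_nat_mul (m : ℕ) (x : ℝ) : NI (m * x) ≤ m * NI x := by
  have h := NI_le (m * x) (m * round x)
  refine h.trans ?_
  rw [show (m:ℝ) * x - ((m * round x : ℤ) : ℝ) = (m:ℝ) * (x - round x) by push_cast; ring,
    abs_mul, abs_of_nonneg (by positivity : (0:ℝ) ≤ (m:ℝ))]
  exact le_of_eq rfl

lemma NI_eq_abs {x : ℝ} (h : |x| ≤ 1/2) : NI x = |x| := by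
  refine le_antisymm (NI_le_abs x) ?_
  rcases eq_or_ne (round x) 0 with h0 | h0
  · simp [NI, h0]
  · have h1 : (1:ℝ) ≤ |(round x : ℝ)| := by
      have : (1:ℤ) ≤ |round x| := Int.one_le_abs (by exact_mod_cast h0)
      calc (1:ℝ) = ((1:ℤ):ℝ) := by norm_num
        _ ≤ ((|round x| : ℤ) : ℝ) := by exact_mod_cast this
        _ = |(round x : ℝ)| := by push_cast; ring
    have h2 : |(round x:ℝ)| - |x| ≤ |x - round x| := by
      have := abs_sub_abs_le_abs_sub (round x : ℝ) x
      rwa [abs_sub_comm] at this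
    rw [NI_def]; linarith

lemma NI_coe (x : ℝ) : ‖((x : ℝ) : UnitAddCircle)‖ = NI x := by
  rw [AddCircle.norm_eq]; simp [NI]

/-- Weyl-type lemma: if `‖m^e x‖` is small for all `1 ≤ m ≤ M`, then `‖x‖ ≤ θ / M^e`. -/
lemma NI_pow_range {e M : ℕ} (he : 1 ≤ e) (hM : 1 ≤ M) {x θ : ℝ}
    (hθ : 2^e * θ ≤ 1/2)
    (h : ∀ m : ℕ, 1 ≤ m → m ≤ M → NI ((m:ℝ)^e * x) ≤ θ) :
    NI x ≤ θ / (M:ℝ)^e := by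
  have hσθ : NI x ≤ θ := by simpa using h 1 le_rfl hM
  have hθ0 : 0 ≤ θ := le_trans (NI_nonneg x) hσθ
  have hyabs : |x - round x| = NI x := rfl
  have hNy : ∀ m : ℕ, NI ((m:ℝ)^e * x) = NI ((m:ℝ)^e * (x - round x)) := by
    intro m
    have heq : (m:ℝ)^e * x = (m:ℝ)^e * (x - round x) + ((m:ℕ)^e * round x : ℤ) := by
      push_cast; ring
    rw [heq, NI_add_int]
  have habs : ∀ m : ℕ, (m:ℝ)^e * NI x ≤ 1/2 → NI ((m:ℝ)^e * x) = (m:ℝ)^e * NI x := by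
    intro m hm
    rw [hNy m, NI_eq_abs (by rw [abs_mul, abs_of_nonneg (by positivity : (0:ℝ) ≤ (m:ℝ)^e), hyabs]; exact hm),
      abs_mul, abs_of_nonneg (by positivity : (0:ℝ) ≤ (m:ℝ)^e), hyabs]
  by_contra hcon
  push_neg at hcon
  have hMσ : θ < (M:ℝ)^e * NI x := by
    rw [div_lt_iff₀ (by positivity)] at hcon; linarith
  have hex : ∃ m : ℕ, θ < (m:ℝ)^e * NI x := ⟨M, hMσ⟩
  classical
  have hm₀spec : θ < ((Nat.find hex : ℕ):ℝ)^e * NI x := Nat.find_spec hex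
  have hm₀le : Nat.find hex ≤ M := Nat.find_le hMσ
  have hm₀2 : 2 ≤ Nat.find hex := by
    by_contra hlt
    push_neg at hlt
    have h01 : Nat.find hex = 0 ∨ Nat.find hex = 1 := by omega
    rcases h01 with h' | h' <;> rw [h'] at hm₀spec
    · rw [Nat.cast_zero, zero_pow (by omega : e ≠ 0), zero_mul] at hm₀spec; linarith
    · rw [Nat.cast_one, one_pow, one_mul] at hm₀spec; linarith
  have hprev : ¬ θ < ((Nat.find hex - 1 : ℕ):ℝ)^e * NI x :=
    Nat.find_min hex (by omega)
  push_neg at hprev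
  have hσ0 : 0 < NI x := by
    rcases lt_or_ge 0 (NI x) with h' | h'
    · exact h'
    · exfalso; nlinarith [pow_pos (by positivity : (0:ℝ) < (M:ℝ)) e]
  have hdouble : ((Nat.find hex : ℕ):ℝ)^e ≤ 2^e * ((Nat.find hex - 1 : ℕ):ℝ)^e := by
    rw [← mul_pow]
    apply pow_le_pow_left₀ (by positivity)
    have h1 : (1:ℝ) ≤ ((Nat.find hex - 1 : ℕ):ℝ) := by
      have : 1 ≤ Nat.find hex - 1 := by omega
      exact_mod_cast this
    have h2 : ((Nat.find hex : ℕ):ℝ) = ((Nat.find hex - 1 : ℕ):ℝ) + 1 := by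
      have h3 : Nat.find hex = (Nat.find hex - 1) + 1 := by omega
      exact_mod_cast congrArg (Nat.cast (R := ℝ)) h3
    rw [h2]; linarith
  have hsmall : ((Nat.find hex : ℕ):ℝ)^e * NI x ≤ 1/2 := by
    calc ((Nat.find hex : ℕ):ℝ)^e * NI x
        ≤ 2^e * (((Nat.find hex - 1 : ℕ):ℝ)^e * NI x) := by
          rw [← mul_assoc]; exact mul_le_mul_of_nonneg_right hdouble hσ0.le
      _ ≤ 2^e * θ := mul_le_mul_of_nonneg_left hprev (by positivity)
      _ ≤ 1/2 := hθ
  have hfinal := h (Nat.find hex) (by omega) hm₀le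
  rw [habs _ hsmall] at hfinal
  linarith

/-! ### Binomial coefficient casts -/

lemma cast_choose_two' (n : ℕ) : ((n.choose 2 : ℕ) : ℝ) = n*(n-1)/2 := by
  induction n with
  | zero => simp
  | succ n ih =>
    rw [Nat.choose_succ_succ']
    push_cast [ih, Nat.choose_one_right]
    ring

lemma cast_choose_three' (n : ℕ) : ((n.choose 3 : ℕ) : ℝ) = n*(n-1)*(n-2)/6 := by
  induction n with
  | zero => simp
  | succ n ih =>
    rw [Nat.choose_succ_succ']
    push_cast [ih, cast_choose_two']
    ring

lemma cast_choose_four' (n : ℕ) : ((n.choose 4 : ℕ) : ℝ) = n*(n-1)*(n-2)*(n-3)/24 := by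
  induction n with
  | zero => simp
  | succ n ih =>
    rw [Nat.choose_succ_succ']
    push_cast [ih, cast_choose_three']
    ring

/-! ### The core analytic lemma -/

/-- The real-valued polynomial lift of the 4th coordinate of the skew-shift orbit. -/
noncomputable def RR (α w0 w1 w2 w3 : ℝ) (n : ℕ) : ℝ :=
  w3 + n * w2 + (n.choose 2 : ℕ) * w1 + (n.choose 3 : ℕ) * w0 + (n.choose 4 : ℕ) * α

/-- Core analytic lemma: the repetition property of the lifted orbit polynomial forces
`q^2 * ‖q (4 w0 - 6 α)‖` to be arbitrarily small. -/
lemma core (α w0 w1 w2 w3 : ℝ)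
    (H : ∀ ε : ℝ, 0 < ε → ∃ q : ℕ, 0 < q ∧
      ∀ n : ℕ, n ≤ 6*q → NI (RR α w0 w1 w2 w3 (n+q) - RR α w0 w1 w2 w3 n) < ε) :
    ∀ δ : ℝ, 0 < δ → ∃ q : ℕ, 0 < q ∧
      ((q:ℝ))^2 * NI ((q:ℝ) * (4*w0 - 6*α)) ≤ δ := by
  intro δ hδ
  set ε : ℝ := min (1/128) (δ/14) with hε
  have hε0 : 0 < ε := lt_min (by norm_num) (by linarith)
  obtain ⟨q, hq0, hQ⟩ := H ε hε0
  set Qf : ℕ → ℝ := fun n => RR α w0 w1 w2 w3 (n+q) - RR α w0 w1 w2 w3 n with hQf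
  set A : ℝ := α * q / 6 with hA
  set B : ℝ := α * (q:ℝ)^2 / 4 + (q:ℝ) * w0 / 2 - 3 * α * q / 4 with hB
  have hq1 : (1:ℝ) ≤ (q:ℝ) := by exact_mod_cast hq0
  have I3 : ∀ m : ℕ, Qf (3*m) - 3 * Qf (2*m) + 3 * Qf m - Qf 0 = (m:ℝ)^3 * (6*A) := by
    intro m
    simp only [hQf, RR]
    push_cast [cast_choose_two', cast_choose_three', cast_choose_four']
    rw [hA]; ring
  have I2 : ∀ m : ℕ, Qf (2*m) - 2 * Qf m + Qf 0 = (m:ℝ)^3 * (6*A) + (m:ℝ)^2 * (2*B) := by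
    intro m
    simp only [hQf, RR]
    push_cast [cast_choose_two', cast_choose_three', cast_choose_four']
    rw [hA, hB]; ring
  have hA3 : ∀ m : ℕ, 1 ≤ m → m ≤ 2*q → NI ((m:ℝ)^3 * (6*A)) ≤ 8*ε := by
    intro m h1 h2
    rw [← I3 m]
    have e1 : NI (Qf (3*m)) < ε := hQ _ (by omega)
    have e2 : NI (Qf (2*m)) < ε := hQ _ (by omega)
    have e3 : NI (Qf m) < ε := hQ _ (by omega)
    have e4 : NI (Qf 0) < ε := hQ _ (by omega)
    have t1 : NI (3 * Qf (2*m)) ≤ 3 * NI (Qf (2*m)) := by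
      exact_mod_cast NI_nat_mul 3 (Qf (2*m))
    have t2 : NI (3 * Qf m) ≤ 3 * NI (Qf m) := by
      exact_mod_cast NI_nat_mul 3 (Qf m)
    calc NI (Qf (3*m) - 3 * Qf (2*m) + 3 * Qf m - Qf 0)
        ≤ NI (Qf (3*m) - 3 * Qf (2*m) + 3 * Qf m) + NI (Qf 0) := NI_sub_le _ _
      _ ≤ NI (Qf (3*m) - 3 * Qf (2*m)) + NI (3 * Qf m) + NI (Qf 0) := by
          linarith [NI_add_le (Qf (3*m) - 3 * Qf (2*m)) (3 * Qf m)]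
      _ ≤ NI (Qf (3*m)) + NI (3 * Qf (2*m)) + NI (3 * Qf m) + NI (Qf 0) := by
          linarith [NI_sub_le (Qf (3*m)) (3 * Qf (2*m))]
      _ ≤ 8*ε := by linarith
  have hεsmall : ε ≤ 1/128 := min_le_left _ _
  have hA6 : NI (6*A) ≤ ε / (q:ℝ)^3 := by
    have h := NI_pow_range (e := 3) (M := 2*q) (by norm_num) (by omega)
      (θ := 8*ε) (by norm_num; linarith) hA3
    have : ((2*q : ℕ):ℝ)^3 = 8 * (q:ℝ)^3 := by push_cast; ring
    rw [this] at h
    calc NI (6*A) ≤ 8*ε / (8*(q:ℝ)^3) := h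
      _ = ε / (q:ℝ)^3 := by rw [mul_div_mul_left]; norm_num
  have hB2 : ∀ m : ℕ, 1 ≤ m → m ≤ 2*q → NI ((m:ℝ)^2 * (2*B)) ≤ 12*ε := by
    intro m h1 h2
    have key : (m:ℝ)^2 * (2*B) = (Qf (2*m) - 2 * Qf m + Qf 0) - (m:ℝ)^3 * (6*A) := by
      rw [I2 m]; ring
    rw [key]
    have e2 : NI (Qf (2*m)) < ε := hQ _ (by omega)
    have e3 : NI (Qf m) < ε := hQ _ (by omega)
    have e4 : NI (Qf 0) < ε := hQ _ (by omega)
    have t2 : NI (2 * Qf m) ≤ 2 * NI (Qf m) := by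
      exact_mod_cast NI_nat_mul 2 (Qf m)
    have tA : NI ((m:ℝ)^3 * (6*A)) ≤ (m:ℝ)^3 * NI (6*A) := by
      have := NI_nat_mul (m^3) (6*A)
      push_cast at this; exact this
    have hm3 : (m:ℝ)^3 ≤ 8 * (q:ℝ)^3 := by
      have hle : (m:ℝ) ≤ 2*(q:ℝ) := by exact_mod_cast h2
      have := pow_le_pow_left₀ (Nat.cast_nonneg (α := ℝ) m) hle 3
      calc (m:ℝ)^3 ≤ (2*(q:ℝ))^3 := this
        _ = 8*(q:ℝ)^3 := by ring
    have tA2 : NI ((m:ℝ)^3 * (6*A)) ≤ 8*ε := by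
      refine tA.trans ?_
      calc (m:ℝ)^3 * NI (6*A) ≤ 8*(q:ℝ)^3 * (ε / (q:ℝ)^3) := by
            apply mul_le_mul hm3 hA6 (NI_nonneg _) (by positivity)
        _ = 8*ε := by field_simp
    calc NI ((Qf (2*m) - 2 * Qf m + Qf 0) - (m:ℝ)^3 * (6*A))
        ≤ NI (Qf (2*m) - 2 * Qf m + Qf 0) + NI ((m:ℝ)^3 * (6*A)) := NI_sub_le _ _
      _ ≤ NI (Qf (2*m) - 2 * Qf m) + NI (Qf 0) + NI ((m:ℝ)^3 * (6*A)) := by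
          linarith [NI_add_le (Qf (2*m) - 2 * Qf m) (Qf 0)]
      _ ≤ NI (Qf (2*m)) + NI (2 * Qf m) + NI (Qf 0) + NI ((m:ℝ)^3 * (6*A)) := by
          linarith [NI_sub_le (Qf (2*m)) (2 * Qf m)]
      _ ≤ 12*ε := by linarith
  have hB' : NI (2*B) ≤ 3*ε / (q:ℝ)^2 := by
    have h := NI_pow_range (e := 2) (M := 2*q) (by norm_num) (by omega)
      (θ := 12*ε) (by norm_num; linarith) hB2
    have : ((2*q : ℕ):ℝ)^2 = 4 * (q:ℝ)^2 := by push_cast; ring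
    rw [this] at h
    calc NI (2*B) ≤ 12*ε / (4*(q:ℝ)^2) := h
      _ = 3*ε / (q:ℝ)^2 := by rw [div_eq_div_iff (by positivity) (by positivity)]; ring
  refine ⟨q, hq0, ?_⟩
  have key : (q:ℝ) * (4*w0 - 6*α) = 4 * (2*B) - (2*(q:ℝ)) * (6*A) := by
    rw [hA, hB]; ring
  have t4 : NI (4 * (2*B)) ≤ 4 * NI (2*B) := by exact_mod_cast NI_nat_mul 4 (2*B)
  have t2q : NI ((2*(q:ℝ)) * (6*A)) ≤ (2*(q:ℝ)) * NI (6*A) := by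
    have := NI_nat_mul (2*q) (6*A); push_cast at this ⊢; exact this
  have hNfin : NI ((q:ℝ) * (4*w0 - 6*α)) ≤ 14 * ε / (q:ℝ)^2 := by
    rw [key]
    calc NI (4 * (2*B) - (2*(q:ℝ)) * (6*A))
        ≤ NI (4 * (2*B)) + NI ((2*(q:ℝ)) * (6*A)) := NI_sub_le _ _
      _ ≤ 4 * (3*ε / (q:ℝ)^2) + (2*(q:ℝ)) * (ε / (q:ℝ)^3) := by
          have h1 : 4 * NI (2*B) ≤ 4 * (3*ε/(q:ℝ)^2) := by linarith
          have h2 : (2*(q:ℝ)) * NI (6*A) ≤ (2*(q:ℝ)) * (ε/(q:ℝ)^3) := by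
            apply mul_le_mul_of_nonneg_left hA6 (by positivity)
          linarith
      _ = 14 * ε / (q:ℝ)^2 := by field_simp; ring
  calc ((q:ℝ))^2 * NI ((q:ℝ) * (4*w0 - 6*α)) ≤ ((q:ℝ))^2 * (14 * ε / (q:ℝ)^2) := by
        apply mul_le_mul_of_nonneg_left hNfin (by positivity)
    _ = 14 * ε := by field_simp
    _ ≤ δ := by
        have := min_le_right (1/128 : ℝ) (δ/14)
        rw [← hε] at this
        linarith

/-! ### Orbit formulas for the skew shift -/

section orbit
variable {k : ℕ} (hk : 4 ≤ k) (α : UnitAddCircle) (ω : Fin k → UnitAddCircle)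

lemma skew_apply_zero (x : Fin k → UnitAddCircle) (hk0 : 0 < k) :
    skewShift k α x ⟨0, hk0⟩ = x ⟨0, hk0⟩ + α := by
  simp [skewShift]

lemma skew_apply_succ (x : Fin k → UnitAddCircle) (j : ℕ) (hj : j + 1 < k) :
    skewShift k α x ⟨j+1, hj⟩ = x ⟨j+1, hj⟩ + x ⟨j, by omega⟩ := by
  simp [skewShift]

include hk

lemma iter_comp0 (n : ℕ) :
    (skewShift k α)^[n] ω ⟨0, by omega⟩ = ω ⟨0, by omega⟩ + n • α := by
  induction n with
  | zero => simp
  | succ n ih =>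
    rw [Function.iterate_succ_apply', skew_apply_zero _ _ (by omega), ih, succ_nsmul]
    abel

lemma iter_comp1 (n : ℕ) :
    (skewShift k α)^[n] ω ⟨1, by omega⟩ =
      ω ⟨1, by omega⟩ + n • ω ⟨0, by omega⟩ + (n.choose 2) • α := by
  induction n with
  | zero => simp
  | succ n ih =>
    rw [Function.iterate_succ_apply', skew_apply_succ _ _ 0 (by omega), ih,
      iter_comp0 hk α ω n]
    simp only [Nat.choose_succ_succ' n, Nat.choose_one_right, add_nsmul, succ_nsmul]
    abel

lemma iter_comp2 (n : ℕ) :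
    (skewShift k α)^[n] ω ⟨2, by omega⟩ =
      ω ⟨2, by omega⟩ + n • ω ⟨1, by omega⟩ + (n.choose 2) • ω ⟨0, by omega⟩
        + (n.choose 3) • α := by
  induction n with
  | zero => simp
  | succ n ih =>
    rw [Function.iterate_succ_apply', skew_apply_succ _ _ 1 (by omega), ih,
      iter_comp1 hk α ω n]
    simp only [Nat.choose_succ_succ' n, Nat.choose_one_right, add_nsmul, succ_nsmul]
    abel

lemma iter_comp3 (n : ℕ) :
    (skewShift k α)^[n] ω ⟨3, by omega⟩ =
      ω ⟨3, by omega⟩ + n • ω ⟨2, by omega⟩ + (n.choose 2) • ω ⟨1, by omega⟩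
        + (n.choose 3) • ω ⟨0, by omega⟩ + (n.choose 4) • α := by
  induction n with
  | zero => simp
  | succ n ih =>
    rw [Function.iterate_succ_apply', skew_apply_succ _ _ 2 (by omega), ih,
      iter_comp2 hk α ω n]
    simp only [Nat.choose_succ_succ' n, Nat.choose_one_right, add_nsmul, succ_nsmul]
    abel

end orbit

/-! ### The bad set on the circle and its measure -/

open Metric in
/-- The set of points of the circle that are abnormally well approximated. -/
noncomputable def BadSet : Set UnitAddCircle :=
  ⋂ (j : ℕ), ⋃ (q : ℕ),
    (fun y : UnitAddCircle => (((q+1:ℕ)):ℤ) • y) ⁻¹'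
      closedBall 0 (1/(((j:ℝ)+1) * ((q:ℝ)+1)^2))

lemma zsmul_measurable (n : ℤ) : Measurable (fun y : UnitAddCircle => n • y) :=
  (continuous_zsmul n).measurable

lemma BadSet_measurable : MeasurableSet BadSet :=
  MeasurableSet.iInter fun _ => MeasurableSet.iUnion fun _ =>
    (zsmul_measurable _) measurableSet_closedBall

lemma mem_BadSet {y : UnitAddCircle}
    (h : ∀ j : ℕ, ∃ q : ℕ, 0 < q ∧ ‖(q:ℤ) • y‖ ≤ 1/(((j:ℝ)+1) * (q:ℝ)^2)) :
    y ∈ BadSet := by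
  simp only [BadSet, Set.mem_iInter, Set.mem_iUnion]
  intro j
  obtain ⟨q, hq0, hq⟩ := h j
  refine ⟨q - 1, ?_⟩
  have hq' : q - 1 + 1 = q := by omega
  simp only [Set.mem_preimage, Metric.mem_closedBall, dist_zero_right, hq']
  have hc : ((q - 1 : ℕ):ℝ) + 1 = (q:ℝ) := by
    rw [← hq']; push_cast; ring
  rw [hc]
  exact hq

lemma volume_BadSet : volume BadSet = 0 := by
  set C : ℝ := ∑' q : ℕ, (1:ℝ)/((q:ℝ)+1)^2 with hC
  have hsum : Summable (fun q : ℕ => (1:ℝ)/((q:ℝ)+1)^2) := by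
    have h := Real.summable_one_div_nat_pow.mpr (le_refl 2)
    have := (summable_nat_add_iff 1).mpr h
    simpa using this
  have hC0 : 0 ≤ C := tsum_nonneg (fun q => by positivity)
  have hbound : ∀ j : ℕ, volume BadSet ≤ ENNReal.ofReal (2*C/((j:ℝ)+1)) := by
    intro j
    have h1 : volume BadSet ≤ ∑' q : ℕ, volume
        ((fun y : UnitAddCircle => (((q+1:ℕ)):ℤ) • y) ⁻¹'
          Metric.closedBall 0 (1/(((j:ℝ)+1) * ((q:ℝ)+1)^2))) := by
      refine le_trans (measure_mono ?_) (measure_iUnion_le _)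
      exact Set.iInter_subset _ j
    refine h1.trans ?_
    have h2 : ∀ q : ℕ, volume
        ((fun y : UnitAddCircle => (((q+1:ℕ)):ℤ) • y) ⁻¹'
          Metric.closedBall 0 (1/(((j:ℝ)+1) * ((q:ℝ)+1)^2)))
        ≤ ENNReal.ofReal ((2/((j:ℝ)+1)) * (1/((q:ℝ)+1)^2)) := by
      intro q
      have hmp : MeasurePreserving (fun y : UnitAddCircle => (((q+1:ℕ)):ℤ) • y) volume volume :=
        MeasureTheory.Measure.measurePreserving_zsmul volume (by exact_mod_cast Nat.succ_ne_zero q)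
      rw [hmp.measure_preimage measurableSet_closedBall.nullMeasurableSet,
        AddCircle.volume_closedBall]
      refine (ENNReal.ofReal_le_ofReal ?_)
      refine (min_le_right _ _).trans ?_
      refine le_of_eq ?_
      field_simp
    refine (ENNReal.tsum_le_tsum h2).trans ?_
    have heq : ∑' q : ℕ, (2/((j:ℝ)+1)) * (1/((q:ℝ)+1)^2) = 2*C/((j:ℝ)+1) := by
      rw [tsum_mul_left, ← hC]; ring
    rw [← ENNReal.ofReal_tsum_of_nonneg (fun q => by positivity) (hsum.mul_left _), heq]
  refine le_antisymm ?_ zero_le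
  refine ENNReal.le_of_forall_pos_le_add (fun ε hε _ => ?_)
  obtain ⟨j, hj⟩ := exists_nat_gt (2*C/(ε:ℝ))
  refine (hbound j).trans ?_
  rw [zero_add]
  have hεpos : (0:ℝ) < ε := hε
  have : 2*C/((j:ℝ)+1) ≤ (ε:ℝ) := by
    rw [div_le_iff₀ (by positivity)]
    rw [div_lt_iff₀ hεpos] at hj
    nlinarith [hεpos]
  exact (ENNReal.ofReal_le_ofReal this).trans (by rw [ENNReal.ofReal_coe_nnreal])

/-! ### Main theorem -/

theorem stmt19 (k : ℕ) (hk : 4 ≤ k) (α : ℝ) (hα : Irrational α) :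
    volume { ω : Fin k → UnitAddCircle | OrbitRP k (skewShift k (α : UnitAddCircle)) ω } = 0 := by
  -- the map sending the 0th coordinate into the bad set
  set g : UnitAddCircle → UnitAddCircle :=
    fun x => (4:ℤ) • x + (((-6*α : ℝ)) : UnitAddCircle) with hg
  set i0 : Fin k := ⟨0, by omega⟩ with hi0
  -- Step 1: inclusion
  have hincl : { ω : Fin k → UnitAddCircle | OrbitRP k (skewShift k (α : UnitAddCircle)) ω }
      ⊆ (fun ω : Fin k → UnitAddCircle => ω i0) ⁻¹' (g ⁻¹' BadSet) := by
    intro ω hω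
    simp only [Set.mem_setOf_eq] at hω
    -- choose real lifts of the first four coordinates
    obtain ⟨w0, hw0⟩ := QuotientAddGroup.mk_surjective (ω ⟨0, by omega⟩)
    obtain ⟨w1, hw1⟩ := QuotientAddGroup.mk_surjective (ω ⟨1, by omega⟩)
    obtain ⟨w2, hw2⟩ := QuotientAddGroup.mk_surjective (ω ⟨2, by omega⟩)
    obtain ⟨w3, hw3⟩ := QuotientAddGroup.mk_surjective (ω ⟨3, by omega⟩)
    -- the fourth coordinate of the orbit is the coercion of RR
    have horbit : ∀ n : ℕ, (skewShift k (α : UnitAddCircle))^[n] ω ⟨3, by omega⟩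
        = ((RR α w0 w1 w2 w3 n : ℝ) : UnitAddCircle) := by
      intro n
      rw [iter_comp3 hk (α : UnitAddCircle) ω n, ← hw0, ← hw1, ← hw2, ← hw3,
        ← AddCircle.coe_nsmul, ← AddCircle.coe_nsmul, ← AddCircle.coe_nsmul,
        ← AddCircle.coe_nsmul, ← AddCircle.coe_add, ← AddCircle.coe_add, ← AddCircle.coe_add,
        ← AddCircle.coe_add]
      congr 1
      rw [RR]
      push_cast [nsmul_eq_mul]
      ring
    -- hypothesis of the core lemma
    have Hcore : ∀ ε : ℝ, 0 < ε → ∃ q : ℕ, 0 < q ∧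
        ∀ n : ℕ, n ≤ 6*q → NI (RR α w0 w1 w2 w3 (n+q) - RR α w0 w1 w2 w3 n) < ε := by
      intro ε hε
      obtain ⟨q, hq0, hq⟩ := hω ε hε 6 (by norm_num)
      refine ⟨q, hq0, fun n hn => ?_⟩
      have hsum := hq n hn
      have hterm : dist ((skewShift k (α : UnitAddCircle))^[n] ω ⟨3, by omega⟩)
          ((skewShift k (α : UnitAddCircle))^[n+q] ω ⟨3, by omega⟩) < ε := by
        refine lt_of_le_of_lt ?_ hsum
        exact Finset.single_le_sum (f := fun j : Fin k =>
          dist ((skewShift k (α : UnitAddCircle))^[n] ω j)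
            ((skewShift k (α : UnitAddCircle))^[n+q] ω j))
          (fun j _ => dist_nonneg) (Finset.mem_univ (⟨3, by omega⟩ : Fin k))
      rw [horbit n, horbit (n+q), dist_eq_norm, ← AddCircle.coe_sub, NI_coe] at hterm
      rw [show RR α w0 w1 w2 w3 (n+q) - RR α w0 w1 w2 w3 n
        = -(RR α w0 w1 w2 w3 n - RR α w0 w1 w2 w3 (n+q)) by ring, NI_neg]
      exact hterm
    -- apply the core lemma and land in the bad set
    simp only [Set.mem_preimage]
    apply mem_BadSet
    intro j
    obtain ⟨q, hq0, hq⟩ := core α w0 w1 w2 w3 Hcore (1/((j:ℝ)+1)) (by positivity)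
    refine ⟨q, hq0, ?_⟩
    have hg1 : g (ω i0) = (((4*w0 - 6*α : ℝ)) : UnitAddCircle) := by
      rw [hg]
      simp only [hi0]
      rw [← hw0, ← AddCircle.coe_zsmul, ← AddCircle.coe_add]
      congr 1
      push_cast [zsmul_eq_mul]
      ring
    have hgq : (q:ℤ) • g (ω i0) = (((q:ℝ) * (4*w0 - 6*α) : ℝ) : UnitAddCircle) := by
      rw [hg1, ← AddCircle.coe_zsmul]
      congr 1
      push_cast [zsmul_eq_mul]
      ring
    rw [hgq, NI_coe]
    have hq2 : (0:ℝ) < (q:ℝ)^2 := by positivity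
    rw [show 1/(((j:ℝ)+1) * (q:ℝ)^2) = (1/((j:ℝ)+1)) / (q:ℝ)^2 by field_simp]
    rw [le_div_iff₀ hq2]
    calc NI ((q:ℝ) * (4*w0 - 6*α)) * (q:ℝ)^2
        = (q:ℝ)^2 * NI ((q:ℝ) * (4*w0 - 6*α)) := by ring
      _ ≤ 1/((j:ℝ)+1) := hq
  -- Step 2: the preimage is null
  refine measure_mono_null hincl ?_
  have hgmp : MeasurePreserving g volume volume := by
    have h1 : MeasurePreserving (fun x : UnitAddCircle => (4:ℤ) • x) volume volume :=
      MeasureTheory.Measure.measurePreserving_zsmul volume (by norm_num)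
    have h2 : MeasurePreserving
        (fun y : UnitAddCircle => y + (((-6*α : ℝ)) : UnitAddCircle)) volume volume :=
      measurePreserving_add_right volume _
    exact h2.comp h1
  have hnull : volume (g ⁻¹' BadSet) = 0 := by
    rw [hgmp.measure_preimage BadSet_measurable.nullMeasurableSet, volume_BadSet]
  rw [volume_pi]
  exact MeasureTheory.Measure.pi_eval_preimage_null _ hnull
end
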